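/- arXiv:1412.4706 — 3 statements merged into one kernel-verified Lean document; each statement's English description precedes it below -/
import Mathlib

section
/- Let N ≥ 2 be an integer, γ > −N, ν ∈ (0,2), and let B(r,θ) = r^γ b(cos θ) be a non-cutoff cross section with constant C_b ≥ 1. Let f : ℝ^N → [0,∞) be measurable and for v' ≠ v define K_f(v,v') = (2^{N−1}/|v'−v|) ∫_{{w ∈ ℝ^N : w·(v'−v) = 0}} f(v+w) B(r,θ) r^{−(N−2)} dS(w), where r = √(|v'−v|² + |w|²) and θ ∈ (0,π) is determined by cos(θ/2) = |w|/r. Then there exists a constant c ≥ 1, depending only on N, γ, ν and C_b, such that for all v ∈ ℝ^N and v' ≠ v: c^{−1} K̄_f(v,v') ≤ K_f(v,v') ≤ c K̄_f(v,v'). -/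
open MeasureTheory Metric Set
open scoped ENNReal RealInnerProductSpace

set_option maxHeartbeats 1000000

noncomputable section

open Real in
lemma boltzmann_core_aux (N : ℕ) (hN : 2 ≤ N) (γ ν : ℝ) (hγ : -(N : ℝ) < γ) (hν0 : 0 < ν)
    (R s r θ : ℝ) (hR : 0 < R) (hs : 0 < s)
    (hr_def : r = Real.sqrt (R ^ 2 + s ^ 2)) (hθ_def : θ = 2 * Real.arccos (s / r)) :
    θ ∈ Set.Ioo 0 Real.pi ∧
    (0 ≤ Real.cos θ →
      0 < (2 : ℝ) ^ (N - 1) / R * (r ^ γ * θ ^ (-((N : ℝ) - 1) - ν) * r ^ (-((N : ℝ) - 2))) ∧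
      R ^ (-(N : ℝ) - ν) * s ^ (γ + ν + 1) ≤
        (π / 2) ^ ((N : ℝ) - 1 + ν) * 2 ^ (((N : ℝ) - 1 + ν) + (γ + N + 2 * ν) / 2) *
          ((2 : ℝ) ^ (N - 1) / R * (r ^ γ * θ ^ (-((N : ℝ) - 1) - ν) * r ^ (-((N : ℝ) - 2)))) ∧
      (2 : ℝ) ^ (N - 1) / R * (r ^ γ * θ ^ (-((N : ℝ) - 1) - ν) * r ^ (-((N : ℝ) - 2))) ≤
        (2 : ℝ) ^ (N - 1) * 2 ^ ((γ + N + 2 * ν) / 2) *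
          (R ^ (-(N : ℝ) - ν) * s ^ (γ + ν + 1))) ∧
    (Real.cos θ < 0 →
      0 < (2 : ℝ) ^ (N - 1) / R * (r ^ γ * Real.sin θ ^ (γ + ν + 1) * r ^ (-((N : ℝ) - 2))) ∧
      R ^ (-(N : ℝ) - ν) * s ^ (γ + ν + 1) ≤
        2 ^ ((γ + N + 2 * ν) / 2) * 2 ^ (-(γ + ν + 1)) *
          ((2 : ℝ) ^ (N - 1) / R * (r ^ γ * Real.sin θ ^ (γ + ν + 1) * r ^ (-((N : ℝ) - 2)))) ∧
      (2 : ℝ) ^ (N - 1) / R * (r ^ γ * Real.sin θ ^ (γ + ν + 1) * r ^ (-((N : ℝ) - 2))) ≤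
        (2 : ℝ) ^ (N - 1) * 2 ^ (γ + ν + 1) *
          (R ^ (-(N : ℝ) - ν) * s ^ (γ + ν + 1))) := by
  have hN2 : (2 : ℝ) ≤ (N : ℝ) := by exact_mod_cast hN
  have hπ : (0 : ℝ) < π := Real.pi_pos
  have hπ2 : (1 : ℝ) ≤ π / 2 := by nlinarith [Real.pi_gt_three]
  have he : (0 : ℝ) < (N : ℝ) - 1 + ν := by linarith
  have hq : (0 : ℝ) < γ + N + 2 * ν := by linarith
  have hL2 : (0 : ℝ) ≤ Real.log 2 := Real.log_nonneg one_le_two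
  -- basic geometry
  have hr : 0 < r := by rw [hr_def]; positivity
  have hr2 : r ^ 2 = R ^ 2 + s ^ 2 := by rw [hr_def]; exact Real.sq_sqrt (by positivity)
  have hsltr : s < r := by nlinarith
  have hRler : R ≤ r := by nlinarith
  have ht0 : 0 < s / r := by positivity
  have ht1 : s / r < 1 := (div_lt_one hr).2 hsltr
  have harc1 : 0 < Real.arccos (s / r) := Real.arccos_pos.2 ht1
  have harc2 : Real.arccos (s / r) < π / 2 := Real.arccos_lt_pi_div_two.2 ht0
  have hθpos : 0 < θ := by rw [hθ_def]; linarith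
  have hθπ : θ < π := by rw [hθ_def]; linarith
  have hcosθ : Real.cos θ = 2 * (s / r) ^ 2 - 1 := by
    rw [hθ_def, Real.cos_two_mul, Real.cos_arccos (by linarith) ht1.le]
  have hsin' : Real.sin (Real.arccos (s / r)) = R / r := by
    rw [Real.sin_arccos, show 1 - (s / r) ^ 2 = (R / r) ^ 2 by
      field_simp; nlinarith]
    exact Real.sqrt_sq (by positivity)
  have hsinθ : Real.sin θ = 2 * s * R / r ^ 2 := by
    rw [hθ_def, Real.sin_two_mul, hsin', Real.cos_arccos (by linarith) ht1.le]
    field_simp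
  have hsinpos : 0 < Real.sin θ := by rw [hsinθ]; positivity
  -- log facts
  have hLsin : Real.log (Real.sin θ)
      = Real.log 2 + Real.log s + Real.log R - 2 * Real.log r := by
    rw [hsinθ, Real.log_div (by positivity) (by positivity),
      Real.log_mul (by positivity) hR.ne', Real.log_mul two_ne_zero hs.ne', Real.log_pow]
    push_cast; ring
  have hLsr : Real.log s ≤ Real.log r := Real.log_le_log hs hsltr.le
  have hLRr : Real.log R ≤ Real.log r := Real.log_le_log hR hRler
  have hLsinθ : Real.log (Real.sin θ) ≤ Real.log θ :=
    Real.log_le_log hsinpos (Real.sin_le hθpos.le)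
  -- positivity of the three main quantities
  have hMpos : 0 < R ^ (-(N : ℝ) - ν) * s ^ (γ + ν + 1) :=
    mul_pos (Real.rpow_pos_of_pos hR _) (Real.rpow_pos_of_pos hs _)
  have hDApos : 0 < (2 : ℝ) ^ (N - 1) / R *
      (r ^ γ * θ ^ (-((N : ℝ) - 1) - ν) * r ^ (-((N : ℝ) - 2))) := by
    have := Real.rpow_pos_of_pos hθpos (-((N : ℝ) - 1) - ν)
    have := Real.rpow_pos_of_pos hr γ
    have := Real.rpow_pos_of_pos hr (-((N : ℝ) - 2))
    positivity
  have hDBpos : 0 < (2 : ℝ) ^ (N - 1) / R *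
      (r ^ γ * Real.sin θ ^ (γ + ν + 1) * r ^ (-((N : ℝ) - 2))) := by
    have := Real.rpow_pos_of_pos hsinpos (γ + ν + 1)
    have := Real.rpow_pos_of_pos hr γ
    have := Real.rpow_pos_of_pos hr (-((N : ℝ) - 2))
    positivity
  -- log expansions
  have hM : Real.log (R ^ (-(N : ℝ) - ν) * s ^ (γ + ν + 1))
      = (-(N : ℝ) - ν) * Real.log R + (γ + ν + 1) * Real.log s := by
    rw [Real.log_mul (Real.rpow_pos_of_pos hR _).ne' (Real.rpow_pos_of_pos hs _).ne',
      Real.log_rpow hR, Real.log_rpow hs]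
  have hDA : Real.log ((2 : ℝ) ^ (N - 1) / R *
        (r ^ γ * θ ^ (-((N : ℝ) - 1) - ν) * r ^ (-((N : ℝ) - 2))))
      = ((N : ℝ) - 1) * Real.log 2 - Real.log R + γ * Real.log r
        + (-((N : ℝ) - 1) - ν) * Real.log θ + (-((N : ℝ) - 2)) * Real.log r := by
    rw [Real.log_mul (by positivity) (by positivity),
      Real.log_div (by positivity) hR.ne',
      Real.log_mul (by positivity) (Real.rpow_pos_of_pos hr _).ne',
      Real.log_mul (Real.rpow_pos_of_pos hr _).ne' (Real.rpow_pos_of_pos hθpos _).ne',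
      Real.log_pow, Real.log_rpow hr, Real.log_rpow hθpos, Real.log_rpow hr,
      Nat.cast_sub (by omega : 1 ≤ N), Nat.cast_one]
    ring
  have hDB : Real.log ((2 : ℝ) ^ (N - 1) / R *
        (r ^ γ * Real.sin θ ^ (γ + ν + 1) * r ^ (-((N : ℝ) - 2))))
      = ((N : ℝ) - 1) * Real.log 2 - Real.log R + γ * Real.log r
        + (γ + ν + 1) * Real.log (Real.sin θ) + (-((N : ℝ) - 2)) * Real.log r := by
    rw [Real.log_mul (by positivity) (by positivity),
      Real.log_div (by positivity) hR.ne',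
      Real.log_mul (by positivity) (Real.rpow_pos_of_pos hr _).ne',
      Real.log_mul (Real.rpow_pos_of_pos hr _).ne' (Real.rpow_pos_of_pos hsinpos _).ne',
      Real.log_pow, Real.log_rpow hr, Real.log_rpow hsinpos, Real.log_rpow hr,
      Nat.cast_sub (by omega : 1 ≤ N), Nat.cast_one]
    ring
  -- premultiplied facts valid in both cases
  have f2 : ((N : ℝ) - 1 + ν) * Real.log (Real.sin θ) ≤ ((N : ℝ) - 1 + ν) * Real.log θ :=
    mul_le_mul_of_nonneg_left hLsinθ he.le
  have f3 : ((N : ℝ) - 1 + ν) * Real.log (Real.sin θ)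
      = ((N : ℝ) - 1 + ν) * (Real.log 2 + Real.log s + Real.log R - 2 * Real.log r) := by
    rw [hLsin]
  have g3 : (γ + ν + 1) * Real.log (Real.sin θ)
      = (γ + ν + 1) * (Real.log 2 + Real.log s + Real.log R - 2 * Real.log r) := by
    rw [hLsin]
  have f4 : (γ + N + 2 * ν) * Real.log s ≤ (γ + N + 2 * ν) * Real.log r :=
    mul_le_mul_of_nonneg_left hLsr hq.le
  have g4 : (γ + N + 2 * ν) * Real.log R ≤ (γ + N + 2 * ν) * Real.log r :=
    mul_le_mul_of_nonneg_left hLRr hq.le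
  have f6 : (0 : ℝ) ≤ (γ + N + 2 * ν) * Real.log 2 := mul_nonneg hq.le hL2
  have f7 : (0 : ℝ) ≤ ((N : ℝ) - 1) * Real.log 2 := mul_nonneg (by linarith) hL2
  have f8 : (0 : ℝ) ≤ ((N : ℝ) - 1 + ν) * Real.log 2 := mul_nonneg he.le hL2
  refine ⟨⟨hθpos, hθπ⟩, fun hcos => ?_, fun hcos => ?_⟩
  · -- case cos θ ≥ 0
    have hθhalf : θ ≤ π / 2 := by
      by_contra h
      push_neg at h
      exact absurd (Real.cos_neg_of_pi_div_two_lt_of_lt h (by linarith)) (not_lt.2 hcos)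
    have hJ0 : 2 / π * θ ≤ Real.sin θ := Real.mul_le_sin hθpos.le hθhalf
    have hJordan : θ ≤ π / 2 * Real.sin θ := by
      have h' := mul_le_mul_of_nonneg_left hJ0 (by positivity : (0:ℝ) ≤ π / 2)
      have heq : π / 2 * (2 / π * θ) = θ := by field_simp
      linarith [heq ▸ h']
    have hLθπsin : Real.log θ ≤ Real.log (π / 2) + Real.log (Real.sin θ) := by
      calc Real.log θ ≤ Real.log (π / 2 * Real.sin θ) := Real.log_le_log hθpos hJordan
      _ = _ := Real.log_mul (by positivity) hsinpos.ne'
    have hr2s2 : r ^ 2 ≤ 2 * s ^ 2 := by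
      have h1 : (s / r) ^ 2 * r ^ 2 = s ^ 2 := by field_simp
      have hc' : 0 ≤ 2 * (s / r) ^ 2 - 1 := by rw [← hcosθ]; exact hcos
      have h2 : 1 / 2 * r ^ 2 ≤ (s / r) ^ 2 * r ^ 2 :=
        mul_le_mul_of_nonneg_right (by linarith) (sq_nonneg r)
      linarith only [h1, h2, hr2]
    have hr2s : r ≤ Real.sqrt 2 * s := by
      rw [hr_def]
      calc Real.sqrt (R ^ 2 + s ^ 2) ≤ Real.sqrt (2 * s ^ 2) :=
        Real.sqrt_le_sqrt (by linarith only [hr2s2, hr2])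
      _ = Real.sqrt 2 * s := by
        rw [Real.sqrt_mul (by norm_num), Real.sqrt_sq hs.le]
    have hLr2s : Real.log r ≤ 1 / 2 * Real.log 2 + Real.log s := by
      calc Real.log r ≤ Real.log (Real.sqrt 2 * s) := Real.log_le_log hr hr2s
      _ = _ := by
        rw [Real.log_mul (by positivity) hs.ne', Real.log_sqrt (by norm_num)]; ring
    have f1 : ((N : ℝ) - 1 + ν) * Real.log θ
        ≤ ((N : ℝ) - 1 + ν) * (Real.log (π / 2) + Real.log (Real.sin θ)) :=
      mul_le_mul_of_nonneg_left hLθπsin he.le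
    have f5 : (γ + N + 2 * ν) * Real.log r
        ≤ (γ + N + 2 * ν) * (1 / 2 * Real.log 2 + Real.log s) :=
      mul_le_mul_of_nonneg_left hLr2s hq.le
    refine ⟨hDApos, ?_, ?_⟩
    · -- M ≤ K₁ * DA
      have key : R ^ (-(N : ℝ) - ν) * s ^ (γ + ν + 1)
          ≤ (π / 2) ^ ((N : ℝ) - 1 + ν) * 2 ^ (((N : ℝ) - 1 + ν) + (γ + N + 2 * ν) / 2) *
            ((2 : ℝ) ^ (N - 1) / R *
              (r ^ γ * θ ^ (-((N : ℝ) - 1) - ν) * r ^ (-((N : ℝ) - 2)))) := by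
        rw [← Real.log_le_log_iff hMpos (by positivity), hM,
          Real.log_mul (by positivity) hDApos.ne',
          Real.log_mul (by positivity) (by positivity),
          Real.log_rpow (by positivity), Real.log_rpow two_pos, hDA]
        linarith only [f1, f3, f4, f6, f7]
      exact key
    · -- DA ≤ c₀ * M
      have key : (2 : ℝ) ^ (N - 1) / R *
            (r ^ γ * θ ^ (-((N : ℝ) - 1) - ν) * r ^ (-((N : ℝ) - 2)))
          ≤ (2 : ℝ) ^ (N - 1) * 2 ^ ((γ + N + 2 * ν) / 2) *
            (R ^ (-(N : ℝ) - ν) * s ^ (γ + ν + 1)) := by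
        rw [← Real.log_le_log_iff hDApos (by positivity), hDA,
          Real.log_mul (by positivity) hMpos.ne',
          Real.log_mul (by positivity) (by positivity),
          Real.log_pow, Real.log_rpow two_pos, hM,
          Nat.cast_sub (by omega : 1 ≤ N), Nat.cast_one]
        linarith only [f2, f3, f5, f6, f8]
      exact key
  · -- case cos θ < 0
    have hr2R2 : r ^ 2 ≤ 2 * R ^ 2 := by
      have h1 : (s / r) ^ 2 * r ^ 2 = s ^ 2 := by field_simp
      have hc' : 2 * (s / r) ^ 2 - 1 < 0 := by rw [← hcosθ]; exact hcos
      have h2 : (s / r) ^ 2 * r ^ 2 ≤ 1 / 2 * r ^ 2 :=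
        mul_le_mul_of_nonneg_right (by linarith) (sq_nonneg r)
      linarith only [h1, h2, hr2]
    have hr2R : r ≤ Real.sqrt 2 * R := by
      rw [hr_def]
      calc Real.sqrt (R ^ 2 + s ^ 2) ≤ Real.sqrt (2 * R ^ 2) :=
        Real.sqrt_le_sqrt (by linarith only [hr2R2, hr2])
      _ = Real.sqrt 2 * R := by
        rw [Real.sqrt_mul (by norm_num), Real.sqrt_sq hR.le]
    have hLr2R : Real.log r ≤ 1 / 2 * Real.log 2 + Real.log R := by
      calc Real.log r ≤ Real.log (Real.sqrt 2 * R) := Real.log_le_log hr hr2R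
      _ = _ := by
        rw [Real.log_mul (by positivity) hR.ne', Real.log_sqrt (by norm_num)]; ring
    have g5 : (γ + N + 2 * ν) * Real.log r
        ≤ (γ + N + 2 * ν) * (1 / 2 * Real.log 2 + Real.log R) :=
      mul_le_mul_of_nonneg_left hLr2R hq.le
    refine ⟨hDBpos, ?_, ?_⟩
    · -- M ≤ K₄ * DB
      have key : R ^ (-(N : ℝ) - ν) * s ^ (γ + ν + 1)
          ≤ 2 ^ ((γ + N + 2 * ν) / 2) * 2 ^ (-(γ + ν + 1)) *
            ((2 : ℝ) ^ (N - 1) / R *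
              (r ^ γ * Real.sin θ ^ (γ + ν + 1) * r ^ (-((N : ℝ) - 2)))) := by
        rw [← Real.log_le_log_iff hMpos (by positivity), hM,
          Real.log_mul (by positivity) hDBpos.ne',
          Real.log_mul (by positivity) (by positivity),
          Real.log_rpow two_pos, Real.log_rpow two_pos, hDB]
        linarith only [g3, g5, f7]
      exact key
    · -- DB ≤ c₀ * M
      have key : (2 : ℝ) ^ (N - 1) / R *
            (r ^ γ * Real.sin θ ^ (γ + ν + 1) * r ^ (-((N : ℝ) - 2)))
          ≤ (2 : ℝ) ^ (N - 1) * 2 ^ (γ + ν + 1) *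
            (R ^ (-(N : ℝ) - ν) * s ^ (γ + ν + 1)) := by
        rw [← Real.log_le_log_iff hDBpos (by positivity), hDB,
          Real.log_mul (by positivity) hMpos.ne',
          Real.log_mul (by positivity) (by positivity),
          Real.log_pow, Real.log_rpow two_pos, hM,
          Nat.cast_sub (by omega : 1 ≤ N), Nat.cast_one]
        linarith only [g3, g4]
      exact key

open Real in
lemma boltzmann_core (N : ℕ) (hN : 2 ≤ N) (γ ν : ℝ) (hγ : -(N : ℝ) < γ) (hν0 : 0 < ν) :
    ∃ c₀ : ℝ, 1 ≤ c₀ ∧ ∀ R s r θ : ℝ, 0 < R → 0 < s →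
      r = Real.sqrt (R ^ 2 + s ^ 2) → θ = 2 * Real.arccos (s / r) →
      θ ∈ Set.Ioo 0 Real.pi ∧
      (0 ≤ Real.cos θ →
        R ^ (-(N : ℝ) - ν) * s ^ (γ + ν + 1) ≤
          c₀ * ((2 : ℝ) ^ (N - 1) / R * (r ^ γ * θ ^ (-((N : ℝ) - 1) - ν) * r ^ (-((N : ℝ) - 2)))) ∧
        (2 : ℝ) ^ (N - 1) / R * (r ^ γ * θ ^ (-((N : ℝ) - 1) - ν) * r ^ (-((N : ℝ) - 2))) ≤
          c₀ * (R ^ (-(N : ℝ) - ν) * s ^ (γ + ν + 1))) ∧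
      (Real.cos θ < 0 →
        R ^ (-(N : ℝ) - ν) * s ^ (γ + ν + 1) ≤
          c₀ * ((2 : ℝ) ^ (N - 1) / R * (r ^ γ * Real.sin θ ^ (γ + ν + 1) * r ^ (-((N : ℝ) - 2)))) ∧
        (2 : ℝ) ^ (N - 1) / R * (r ^ γ * Real.sin θ ^ (γ + ν + 1) * r ^ (-((N : ℝ) - 2))) ≤
          c₀ * (R ^ (-(N : ℝ) - ν) * s ^ (γ + ν + 1))) := by
  have hN2 : (2 : ℝ) ≤ (N : ℝ) := by exact_mod_cast hN
  have hπ : (0 : ℝ) < π := Real.pi_pos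
  have hπ2 : (1 : ℝ) ≤ π / 2 := by nlinarith [Real.pi_gt_three]
  have he : (0 : ℝ) < (N : ℝ) - 1 + ν := by linarith
  have hq : (0 : ℝ) < γ + N + 2 * ν := by linarith
  have hL2 : (0 : ℝ) ≤ Real.log 2 := Real.log_nonneg one_le_two
  -- abbreviations (as plain terms)
  -- constants
  have h2N1 : (1 : ℝ) ≤ 2 ^ ((N : ℝ)) := by
    calc (1 : ℝ) = 2 ^ (0 : ℝ) := by simp
    _ ≤ 2 ^ ((N : ℝ)) := Real.rpow_le_rpow_of_exponent_le one_le_two (by positivity)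
  have hApos : (0 : ℝ) < (π / 2) ^ ((N : ℝ) - 1 + ν) * 2 ^ (((N : ℝ) - 1 + ν) + (γ + N + 2 * ν) / 2) := by
    positivity
  have hBtpos : (0 : ℝ) < (2 ^ (γ + ν + 1) + 2 ^ (-(γ + ν + 1))) * 2 ^ ((γ + N + 2 * ν) / 2) := by
    positivity
  have hA1' : (1 : ℝ) ≤ (π / 2) ^ ((N : ℝ) - 1 + ν) := by
    calc (1 : ℝ) = 1 ^ ((N : ℝ) - 1 + ν) := (Real.one_rpow _).symm
    _ ≤ (π / 2) ^ ((N : ℝ) - 1 + ν) := Real.rpow_le_rpow zero_le_one hπ2 he.le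
  have hA2' : (1 : ℝ) ≤ (2 : ℝ) ^ (((N : ℝ) - 1 + ν) + (γ + N + 2 * ν) / 2) := by
    calc (1 : ℝ) = 2 ^ (0 : ℝ) := by simp
    _ ≤ _ := Real.rpow_le_rpow_of_exponent_le one_le_two (by positivity)
  have h2q : (1 : ℝ) ≤ (2 : ℝ) ^ ((γ + N + 2 * ν) / 2) := by
    calc (1 : ℝ) = 2 ^ (0 : ℝ) := by simp
    _ ≤ _ := Real.rpow_le_rpow_of_exponent_le one_le_two (by positivity)
  have hsum1 : (1 : ℝ) ≤ 2 ^ (γ + ν + 1) + 2 ^ (-(γ + ν + 1)) := by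
    have hx : (0 : ℝ) < 2 ^ (γ + ν + 1) := by positivity
    have hy : (0 : ℝ) < 2 ^ (-(γ + ν + 1)) := by positivity
    have hxy : (2 : ℝ) ^ (γ + ν + 1) * 2 ^ (-(γ + ν + 1)) = 1 := by
      rw [← Real.rpow_add two_pos, show γ + ν + 1 + -(γ + ν + 1) = 0 by ring, Real.rpow_zero]
    nlinarith [sq_nonneg ((2 : ℝ) ^ (γ + ν + 1) - 1), mul_pos hx hy]
  have h2pow : (2 : ℝ) ^ (N - 1) ≤ 2 ^ ((N : ℝ)) := by
    rw [← Real.rpow_natCast 2 (N - 1)]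
    apply Real.rpow_le_rpow_of_exponent_le one_le_two
    rw [Nat.cast_sub (by omega)]
    push_cast; linarith
  have hK1 : (π / 2) ^ ((N : ℝ) - 1 + ν) * 2 ^ (((N : ℝ) - 1 + ν) + (γ + N + 2 * ν) / 2)
      ≤ 2 ^ ((N : ℝ)) * ((π / 2) ^ ((N : ℝ) - 1 + ν) * 2 ^ (((N : ℝ) - 1 + ν) + (γ + N + 2 * ν) / 2)
        + (2 ^ (γ + ν + 1) + 2 ^ (-(γ + ν + 1))) * 2 ^ ((γ + N + 2 * ν) / 2)) := by
    nlinarith [mul_nonneg (sub_nonneg.2 h2N1) (le_of_lt (by positivity :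
      (0:ℝ) < (π / 2) ^ ((N : ℝ) - 1 + ν) * 2 ^ (((N : ℝ) - 1 + ν) + (γ + N + 2 * ν) / 2)
        + (2 ^ (γ + ν + 1) + 2 ^ (-(γ + ν + 1))) * 2 ^ ((γ + N + 2 * ν) / 2))), hBtpos]
  have hK2 : (2 : ℝ) ^ (N - 1) * 2 ^ ((γ + N + 2 * ν) / 2)
      ≤ 2 ^ ((N : ℝ)) * ((π / 2) ^ ((N : ℝ) - 1 + ν) * 2 ^ (((N : ℝ) - 1 + ν) + (γ + N + 2 * ν) / 2)
        + (2 ^ (γ + ν + 1) + 2 ^ (-(γ + ν + 1))) * 2 ^ ((γ + N + 2 * ν) / 2)) := by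
    have h1 : (2 : ℝ) ^ (N - 1) * 2 ^ ((γ + N + 2 * ν) / 2)
        ≤ 2 ^ ((N : ℝ)) * ((2 ^ (γ + ν + 1) + 2 ^ (-(γ + ν + 1))) * 2 ^ ((γ + N + 2 * ν) / 2)) := by
      rw [← mul_assoc]
      apply mul_le_mul _ le_rfl (by positivity) (by positivity)
      nlinarith [h2pow, mul_le_mul_of_nonneg_right hsum1 (le_of_lt (by positivity :
        (0:ℝ) < 2 ^ ((N : ℝ)))), (by positivity : (0:ℝ) < 2 ^ ((N:ℝ)))]
    nlinarith [mul_pos (by positivity : (0:ℝ) < 2 ^ ((N : ℝ))) hApos]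
  have hK3 : (2 : ℝ) ^ (N - 1) * 2 ^ (γ + ν + 1)
      ≤ 2 ^ ((N : ℝ)) * ((π / 2) ^ ((N : ℝ) - 1 + ν) * 2 ^ (((N : ℝ) - 1 + ν) + (γ + N + 2 * ν) / 2)
        + (2 ^ (γ + ν + 1) + 2 ^ (-(γ + ν + 1))) * 2 ^ ((γ + N + 2 * ν) / 2)) := by
    have h1 : (2 : ℝ) ^ (γ + ν + 1)
        ≤ (2 ^ (γ + ν + 1) + 2 ^ (-(γ + ν + 1))) * 2 ^ ((γ + N + 2 * ν) / 2) := by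
      nlinarith [mul_le_mul_of_nonneg_left h2q (le_of_lt (by positivity : (0:ℝ) < 2 ^ (γ + ν + 1))),
        mul_nonneg (le_of_lt (by positivity : (0:ℝ) < 2 ^ (-(γ + ν + 1)))) (le_of_lt
          (by positivity : (0:ℝ) < 2 ^ ((γ + N + 2 * ν) / 2)))]
    have h2 := mul_le_mul h2pow h1 (by positivity) (by positivity : (0:ℝ) ≤ 2 ^ ((N : ℝ)))
    nlinarith [mul_pos (by positivity : (0:ℝ) < 2 ^ ((N : ℝ))) hApos]
  have hK4 : (2 : ℝ) ^ ((γ + N + 2 * ν) / 2) * 2 ^ (-(γ + ν + 1))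
      ≤ 2 ^ ((N : ℝ)) * ((π / 2) ^ ((N : ℝ) - 1 + ν) * 2 ^ (((N : ℝ) - 1 + ν) + (γ + N + 2 * ν) / 2)
        + (2 ^ (γ + ν + 1) + 2 ^ (-(γ + ν + 1))) * 2 ^ ((γ + N + 2 * ν) / 2)) := by
    have h1 : (2 : ℝ) ^ ((γ + N + 2 * ν) / 2) * 2 ^ (-(γ + ν + 1))
        ≤ 1 * ((2 ^ (γ + ν + 1) + 2 ^ (-(γ + ν + 1))) * 2 ^ ((γ + N + 2 * ν) / 2)) := by
      nlinarith [mul_nonneg (le_of_lt (by positivity : (0:ℝ) < 2 ^ (γ + ν + 1)))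
        (le_of_lt (by positivity : (0:ℝ) < 2 ^ ((γ + N + 2 * ν) / 2)))]
    have h2 := mul_le_mul h2N1 le_rfl (le_of_lt (by positivity :
      (0:ℝ) < (2 ^ (γ + ν + 1) + 2 ^ (-(γ + ν + 1))) * 2 ^ ((γ + N + 2 * ν) / 2))) (by linarith [h2N1])
    nlinarith [mul_pos (by positivity : (0:ℝ) < 2 ^ ((N : ℝ))) hApos, h1,
      mul_le_mul_of_nonneg_left (le_of_lt hBtpos) (le_of_lt (by positivity : (0:ℝ) < 2 ^ ((N:ℝ))))]
  refine ⟨2 ^ ((N : ℝ)) * ((π / 2) ^ ((N : ℝ) - 1 + ν) * 2 ^ (((N : ℝ) - 1 + ν) + (γ + N + 2 * ν) / 2)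
      + (2 ^ (γ + ν + 1) + 2 ^ (-(γ + ν + 1))) * 2 ^ ((γ + N + 2 * ν) / 2)), ?_, ?_⟩
  · have h1 : (1 : ℝ) ≤ (π / 2) ^ ((N : ℝ) - 1 + ν) * 2 ^ (((N : ℝ) - 1 + ν) + (γ + N + 2 * ν) / 2) :=
      one_le_mul_of_one_le_of_one_le hA1' hA2'
    nlinarith [mul_le_mul h2N1 (le_add_of_nonneg_right hBtpos.le) zero_le_one
      (by positivity : (0:ℝ) ≤ 2 ^ ((N : ℝ)))]
  intro R s r θ hR hs hr_def hθ_def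
  obtain ⟨hmem, hA, hB⟩ := boltzmann_core_aux N hN γ ν hγ hν0 R s r θ hR hs hr_def hθ_def
  have hMpos : 0 < R ^ (-(N : ℝ) - ν) * s ^ (γ + ν + 1) :=
    mul_pos (Real.rpow_pos_of_pos hR _) (Real.rpow_pos_of_pos hs _)
  refine ⟨hmem, fun hcos => ?_, fun hcos => ?_⟩
  · obtain ⟨hDApos, h1, h2⟩ := hA hcos
    exact ⟨h1.trans (mul_le_mul_of_nonneg_right hK1 hDApos.le),
      h2.trans (mul_le_mul_of_nonneg_right hK2 hMpos.le)⟩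
  · obtain ⟨hDBpos, h1, h2⟩ := hB hcos
    exact ⟨h1.trans (mul_le_mul_of_nonneg_right hK4 hDBpos.le),
      h2.trans (mul_le_mul_of_nonneg_right hK3 hMpos.le)⟩


/-- The Boltzmann kernel
`K̄_f(v,v') = |v'-v|^{-N-ν} ∫_{w ⊥ (v'-v)} f(v+w) |w|^{γ+ν+1} dS(w)`,
where the inner integral is over the hyperplane orthogonal to `v' - v` with respect to the
`(N-1)`-dimensional Hausdorff measure. -/
def Kbar (N : ℕ) (γ ν : ℝ) (f : EuclideanSpace ℝ (Fin N) → ℝ)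
    (v v' : EuclideanSpace ℝ (Fin N)) : ℝ≥0∞ :=
  ENNReal.ofReal (‖v' - v‖ ^ (-(N : ℝ) - ν)) *
    ∫⁻ w in {w : EuclideanSpace ℝ (Fin N) | ⟪w, v' - v⟫ = 0},
      ENNReal.ofReal (f (v + w) * ‖w‖ ^ (γ + ν + 1)) ∂(μH[(N : ℝ) - 1])

/-- The exact kernel of the integro-differential part `Q₁` of the Boltzmann collision
operator with cross section `B(r,θ) = r^γ b(cos θ)`:
`K_f(v,v') = (2^{N-1}/|v'-v|) ∫_{w ⊥ (v'-v)} f(v+w) B(r,θ) r^{-(N-2)} dS(w)` where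
`r = √(|v'-v|² + |w|²)` and `θ` is determined by `cos(θ/2) = |w|/r`. -/
def KfCross (N : ℕ) (γ : ℝ) (b : ℝ → ℝ≥0∞) (f : EuclideanSpace ℝ (Fin N) → ℝ)
    (v v' : EuclideanSpace ℝ (Fin N)) : ℝ≥0∞ :=
  ENNReal.ofReal ((2 : ℝ) ^ (N - 1) / ‖v' - v‖) *
    ∫⁻ w in {w : EuclideanSpace ℝ (Fin N) | ⟪w, v' - v⟫ = 0},
      ENNReal.ofReal (f (v + w)) *
        (ENNReal.ofReal ((Real.sqrt (‖v' - v‖ ^ 2 + ‖w‖ ^ 2)) ^ γ) *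
          b (Real.cos (2 * Real.arccos (‖w‖ / Real.sqrt (‖v' - v‖ ^ 2 + ‖w‖ ^ 2))))) *
        ENNReal.ofReal ((Real.sqrt (‖v' - v‖ ^ 2 + ‖w‖ ^ 2)) ^ (-((N : ℝ) - 2)))
      ∂(μH[(N : ℝ) - 1])

/-- **Comparability of the Boltzmann kernel with the model kernel** (Corollary 4.2 of the
paper). For a non-cutoff cross section `B(r,θ) = r^γ b(cos θ)` with angular singularity
`b(cos θ) ≈ θ^{-(N-1)-ν}` for `cos θ ≥ 0` and `b(cos θ) ≈ (sin θ)^{γ+ν+1}` for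
`cos θ < 0`, the kernel `K_f` of `Q₁` is comparable to
`K̄_f(v,v') = |v'-v|^{-N-ν} ∫_{w ⊥ (v'-v)} f(v+w)|w|^{γ+ν+1} dS(w)`. -/
theorem boltzmann_kernel_comparable
    (N : ℕ) (hN : 2 ≤ N) (γ ν C_b : ℝ)
    (hγ : -(N : ℝ) < γ) (hν : ν ∈ Ioo (0:ℝ) 2) (hC_b : 1 ≤ C_b) :
    ∃ c : ℝ, 1 ≤ c ∧
      ∀ (b : ℝ → ℝ≥0∞) (f : EuclideanSpace ℝ (Fin N) → ℝ),
        Measurable b →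
        -- the angular cross section bounds
        (∀ θ ∈ Ioo (0:ℝ) Real.pi,
          (0 ≤ Real.cos θ →
            ENNReal.ofReal (C_b⁻¹ * θ ^ (-((N : ℝ) - 1) - ν)) ≤ b (Real.cos θ) ∧
            b (Real.cos θ) ≤ ENNReal.ofReal (C_b * θ ^ (-((N : ℝ) - 1) - ν))) ∧
          (Real.cos θ < 0 →
            ENNReal.ofReal (C_b⁻¹ * Real.sin θ ^ (γ + ν + 1)) ≤ b (Real.cos θ) ∧
            b (Real.cos θ) ≤ ENNReal.ofReal (C_b * Real.sin θ ^ (γ + ν + 1)))) →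
        -- f is measurable and nonnegative
        Measurable f → (∀ v, 0 ≤ f v) →
        -- conclusion: two-sided comparison
        ∀ v v' : EuclideanSpace ℝ (Fin N), v' ≠ v →
          Kbar N γ ν f v v' ≤ ENNReal.ofReal c * KfCross N γ b f v v' ∧
          KfCross N γ b f v v' ≤ ENNReal.ofReal c * Kbar N γ ν f v v' := by
  obtain ⟨c₀, hc₀, hcore⟩ := boltzmann_core N hN γ ν hγ hν.1
  have hCb0 : (0:ℝ) < C_b := by linarith
  refine ⟨C_b * c₀, by nlinarith, ?_⟩
  intro b f hbmeas hb hfmeas hf0 v v' hne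
  have hRpos : (0:ℝ) < ‖v' - v‖ := by
    rw [norm_pos_iff]; exact sub_ne_zero.mpr hne
  have hc0 : (0:ℝ) ≤ C_b * c₀ := by positivity
  have hNR : (0:ℝ) < (N:ℝ) - 1 := by
    have : (2:ℝ) ≤ (N:ℝ) := by exact_mod_cast hN
    linarith
  haveI : NoAtoms (μH[(N:ℝ) - 1] : Measure (EuclideanSpace ℝ (Fin N))) :=
    MeasureTheory.Measure.noAtoms_hausdorff _ hNR
  have hae : ∀ᵐ w ∂((μH[(N:ℝ) - 1] : Measure (EuclideanSpace ℝ (Fin N))).restrict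
      {w : EuclideanSpace ℝ (Fin N) | ⟪w, v' - v⟫ = 0}), w ≠ 0 := by
    rw [ae_iff]
    have hset : {w : EuclideanSpace ℝ (Fin N) | ¬ w ≠ 0} = {0} := by ext w; simp
    rw [hset]
    exact nonpos_iff_eq_zero.1 ((Measure.le_iff'.1 Measure.restrict_le_self {0}).trans (this.measure_singleton 0).le)
  have hCbinv : C_b * C_b⁻¹ = 1 := mul_inv_cancel₀ (ne_of_gt hCb0)
  constructor
  · -- Kbar ≤ c * KfCross
    have e1 : Kbar N γ ν f v v' =
        ∫⁻ w in {w : EuclideanSpace ℝ (Fin N) | ⟪w, v' - v⟫ = 0},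
          ENNReal.ofReal (‖v' - v‖ ^ (-(N : ℝ) - ν)) *
            ENNReal.ofReal (f (v + w) * ‖w‖ ^ (γ + ν + 1)) ∂(μH[(N : ℝ) - 1]) :=
      (lintegral_const_mul' _ _ ENNReal.ofReal_ne_top).symm
    have e2 : ENNReal.ofReal (C_b * c₀) * KfCross N γ b f v v' =
        ∫⁻ w in {w : EuclideanSpace ℝ (Fin N) | ⟪w, v' - v⟫ = 0},
          (ENNReal.ofReal (C_b * c₀) * ENNReal.ofReal ((2 : ℝ) ^ (N - 1) / ‖v' - v‖)) *
            (ENNReal.ofReal (f (v + w)) *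
              (ENNReal.ofReal ((Real.sqrt (‖v' - v‖ ^ 2 + ‖w‖ ^ 2)) ^ γ) *
                b (Real.cos (2 * Real.arccos (‖w‖ / Real.sqrt (‖v' - v‖ ^ 2 + ‖w‖ ^ 2))))) *
              ENNReal.ofReal ((Real.sqrt (‖v' - v‖ ^ 2 + ‖w‖ ^ 2)) ^ (-((N : ℝ) - 2))))
          ∂(μH[(N : ℝ) - 1]) := by
      rw [KfCross, ← mul_assoc]
      exact (lintegral_const_mul' _ _
        (ENNReal.mul_ne_top ENNReal.ofReal_ne_top ENNReal.ofReal_ne_top)).symm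
    rw [e1, e2]
    refine lintegral_mono_ae (hae.mono fun w hw => ?_)
    set R := ‖v' - v‖ with hR_def
    set s := ‖w‖ with hs_def
    set r : ℝ := Real.sqrt (R ^ 2 + s ^ 2) with hr_def
    set θ : ℝ := 2 * Real.arccos (s / r) with hθ_def
    set F := f (v + w) with hF_def
    have hspos : (0:ℝ) < s := by rw [hs_def]; exact norm_pos_iff.2 hw
    have hrpos : (0:ℝ) < r := by rw [hr_def]; positivity
    obtain ⟨hmem, hcase1, hcase2⟩ := hcore R s r θ hRpos hspos hr_def hθ_def
    have hθpos : (0:ℝ) < θ := hmem.1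
    have hsinpos : (0:ℝ) < Real.sin θ := Real.sin_pos_of_pos_of_lt_pi hmem.1 hmem.2
    obtain ⟨hbb1, hbb2⟩ := hb θ hmem
    have hFnn : (0:ℝ) ≤ F := hf0 (v + w)
    rcases le_or_gt 0 (Real.cos θ) with hcos | hcos
    · obtain ⟨hblow, hbup⟩ := hbb1 hcos
      obtain ⟨hA1, hA2⟩ := hcase1 hcos
      have hreal : R ^ (-(N : ℝ) - ν) * (F * s ^ (γ + ν + 1)) ≤
          C_b * c₀ * ((2 : ℝ) ^ (N - 1) / R) *
            (F * (r ^ γ * (C_b⁻¹ * θ ^ (-((N : ℝ) - 1) - ν))) * r ^ (-((N : ℝ) - 2))) := by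
        have step := mul_le_mul_of_nonneg_left hA1 hFnn
        calc R ^ (-(N : ℝ) - ν) * (F * s ^ (γ + ν + 1))
            = F * (R ^ (-(N : ℝ) - ν) * s ^ (γ + ν + 1)) := by ring
        _ ≤ F * (c₀ * ((2 : ℝ) ^ (N - 1) / R *
              (r ^ γ * θ ^ (-((N : ℝ) - 1) - ν) * r ^ (-((N : ℝ) - 2))))) := step
        _ = C_b * C_b⁻¹ * (F * (c₀ * ((2 : ℝ) ^ (N - 1) / R *
              (r ^ γ * θ ^ (-((N : ℝ) - 1) - ν) * r ^ (-((N : ℝ) - 2)))))) := by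
            rw [hCbinv, one_mul]
        _ = _ := by ring
      calc ENNReal.ofReal (R ^ (-(N : ℝ) - ν)) * ENNReal.ofReal (F * s ^ (γ + ν + 1))
          = ENNReal.ofReal (R ^ (-(N : ℝ) - ν) * (F * s ^ (γ + ν + 1))) :=
            (ENNReal.ofReal_mul (by positivity)).symm
      _ ≤ ENNReal.ofReal (C_b * c₀ * ((2 : ℝ) ^ (N - 1) / R) *
            (F * (r ^ γ * (C_b⁻¹ * θ ^ (-((N : ℝ) - 1) - ν))) * r ^ (-((N : ℝ) - 2)))) :=
          ENNReal.ofReal_le_ofReal hreal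
      _ = ENNReal.ofReal (C_b * c₀) * ENNReal.ofReal ((2 : ℝ) ^ (N - 1) / R) *
            (ENNReal.ofReal F *
              (ENNReal.ofReal (r ^ γ) * ENNReal.ofReal (C_b⁻¹ * θ ^ (-((N : ℝ) - 1) - ν))) *
              ENNReal.ofReal (r ^ (-((N : ℝ) - 2)))) := by
          rw [ENNReal.ofReal_mul (mul_nonneg hc0 (le_of_lt (by positivity : (0:ℝ) < (2 : ℝ) ^ (N - 1) / R))),
            ENNReal.ofReal_mul hc0,
            ENNReal.ofReal_mul (mul_nonneg hFnn (le_of_lt (by positivity :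
              (0:ℝ) < r ^ γ * (C_b⁻¹ * θ ^ (-((N : ℝ) - 1) - ν))))),
            ENNReal.ofReal_mul hFnn,
            ENNReal.ofReal_mul (le_of_lt (by positivity : (0:ℝ) < r ^ γ))]
      _ ≤ _ := by gcongr
    · obtain ⟨hblow, hbup⟩ := hbb2 hcos
      obtain ⟨hA1, hA2⟩ := hcase2 hcos
      have hreal : R ^ (-(N : ℝ) - ν) * (F * s ^ (γ + ν + 1)) ≤
          C_b * c₀ * ((2 : ℝ) ^ (N - 1) / R) *
            (F * (r ^ γ * (C_b⁻¹ * Real.sin θ ^ (γ + ν + 1))) * r ^ (-((N : ℝ) - 2))) := by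
        have step := mul_le_mul_of_nonneg_left hA1 hFnn
        calc R ^ (-(N : ℝ) - ν) * (F * s ^ (γ + ν + 1))
            = F * (R ^ (-(N : ℝ) - ν) * s ^ (γ + ν + 1)) := by ring
        _ ≤ F * (c₀ * ((2 : ℝ) ^ (N - 1) / R *
              (r ^ γ * Real.sin θ ^ (γ + ν + 1) * r ^ (-((N : ℝ) - 2))))) := step
        _ = C_b * C_b⁻¹ * (F * (c₀ * ((2 : ℝ) ^ (N - 1) / R *
              (r ^ γ * Real.sin θ ^ (γ + ν + 1) * r ^ (-((N : ℝ) - 2)))))) := by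
            rw [hCbinv, one_mul]
        _ = _ := by ring
      calc ENNReal.ofReal (R ^ (-(N : ℝ) - ν)) * ENNReal.ofReal (F * s ^ (γ + ν + 1))
          = ENNReal.ofReal (R ^ (-(N : ℝ) - ν) * (F * s ^ (γ + ν + 1))) :=
            (ENNReal.ofReal_mul (by positivity)).symm
      _ ≤ ENNReal.ofReal (C_b * c₀ * ((2 : ℝ) ^ (N - 1) / R) *
            (F * (r ^ γ * (C_b⁻¹ * Real.sin θ ^ (γ + ν + 1))) * r ^ (-((N : ℝ) - 2)))) :=
          ENNReal.ofReal_le_ofReal hreal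
      _ = ENNReal.ofReal (C_b * c₀) * ENNReal.ofReal ((2 : ℝ) ^ (N - 1) / R) *
            (ENNReal.ofReal F *
              (ENNReal.ofReal (r ^ γ) * ENNReal.ofReal (C_b⁻¹ * Real.sin θ ^ (γ + ν + 1))) *
              ENNReal.ofReal (r ^ (-((N : ℝ) - 2)))) := by
          rw [ENNReal.ofReal_mul (mul_nonneg hc0 (le_of_lt (by positivity : (0:ℝ) < (2 : ℝ) ^ (N - 1) / R))),
            ENNReal.ofReal_mul hc0,
            ENNReal.ofReal_mul (mul_nonneg hFnn (le_of_lt (by positivity :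
              (0:ℝ) < r ^ γ * (C_b⁻¹ * Real.sin θ ^ (γ + ν + 1))))),
            ENNReal.ofReal_mul hFnn,
            ENNReal.ofReal_mul (le_of_lt (by positivity : (0:ℝ) < r ^ γ))]
      _ ≤ _ := by gcongr
  · -- KfCross ≤ c * Kbar
    have e1 : ENNReal.ofReal (C_b * c₀) * Kbar N γ ν f v v' =
        ∫⁻ w in {w : EuclideanSpace ℝ (Fin N) | ⟪w, v' - v⟫ = 0},
          ENNReal.ofReal (C_b * c₀) * ENNReal.ofReal (‖v' - v‖ ^ (-(N : ℝ) - ν)) *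
            ENNReal.ofReal (f (v + w) * ‖w‖ ^ (γ + ν + 1)) ∂(μH[(N : ℝ) - 1]) := by
      rw [Kbar, ← mul_assoc]
      exact (lintegral_const_mul' _ _
        (ENNReal.mul_ne_top ENNReal.ofReal_ne_top ENNReal.ofReal_ne_top)).symm
    have e2 : KfCross N γ b f v v' =
        ∫⁻ w in {w : EuclideanSpace ℝ (Fin N) | ⟪w, v' - v⟫ = 0},
          ENNReal.ofReal ((2 : ℝ) ^ (N - 1) / ‖v' - v‖) *
            (ENNReal.ofReal (f (v + w)) *
              (ENNReal.ofReal ((Real.sqrt (‖v' - v‖ ^ 2 + ‖w‖ ^ 2)) ^ γ) *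
                b (Real.cos (2 * Real.arccos (‖w‖ / Real.sqrt (‖v' - v‖ ^ 2 + ‖w‖ ^ 2))))) *
              ENNReal.ofReal ((Real.sqrt (‖v' - v‖ ^ 2 + ‖w‖ ^ 2)) ^ (-((N : ℝ) - 2))))
          ∂(μH[(N : ℝ) - 1]) :=
      (lintegral_const_mul' _ _ ENNReal.ofReal_ne_top).symm
    rw [e1, e2]
    refine lintegral_mono_ae (hae.mono fun w hw => ?_)
    set R := ‖v' - v‖ with hR_def
    set s := ‖w‖ with hs_def
    set r : ℝ := Real.sqrt (R ^ 2 + s ^ 2) with hr_def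
    set θ : ℝ := 2 * Real.arccos (s / r) with hθ_def
    set F := f (v + w) with hF_def
    have hspos : (0:ℝ) < s := by rw [hs_def]; exact norm_pos_iff.2 hw
    have hrpos : (0:ℝ) < r := by rw [hr_def]; positivity
    obtain ⟨hmem, hcase1, hcase2⟩ := hcore R s r θ hRpos hspos hr_def hθ_def
    have hθpos : (0:ℝ) < θ := hmem.1
    have hsinpos : (0:ℝ) < Real.sin θ := Real.sin_pos_of_pos_of_lt_pi hmem.1 hmem.2
    obtain ⟨hbb1, hbb2⟩ := hb θ hmem
    have hFnn : (0:ℝ) ≤ F := hf0 (v + w)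
    rcases le_or_gt 0 (Real.cos θ) with hcos | hcos
    · obtain ⟨hblow, hbup⟩ := hbb1 hcos
      obtain ⟨hA1, hA2⟩ := hcase1 hcos
      have hreal : (2 : ℝ) ^ (N - 1) / R *
            (F * (r ^ γ * (C_b * θ ^ (-((N : ℝ) - 1) - ν))) * r ^ (-((N : ℝ) - 2))) ≤
          C_b * c₀ * (R ^ (-(N : ℝ) - ν) * (F * s ^ (γ + ν + 1))) := by
        have step := mul_le_mul_of_nonneg_left hA2 (mul_nonneg hCb0.le hFnn)
        calc (2 : ℝ) ^ (N - 1) / R *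
              (F * (r ^ γ * (C_b * θ ^ (-((N : ℝ) - 1) - ν))) * r ^ (-((N : ℝ) - 2)))
            = C_b * F * ((2 : ℝ) ^ (N - 1) / R *
              (r ^ γ * θ ^ (-((N : ℝ) - 1) - ν) * r ^ (-((N : ℝ) - 2)))) := by ring
        _ ≤ C_b * F * (c₀ * (R ^ (-(N : ℝ) - ν) * s ^ (γ + ν + 1))) := step
        _ = _ := by ring
      calc ENNReal.ofReal ((2 : ℝ) ^ (N - 1) / R) *
            (ENNReal.ofReal F * (ENNReal.ofReal (r ^ γ) * b (Real.cos θ)) *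
              ENNReal.ofReal (r ^ (-((N : ℝ) - 2))))
          ≤ ENNReal.ofReal ((2 : ℝ) ^ (N - 1) / R) *
            (ENNReal.ofReal F *
              (ENNReal.ofReal (r ^ γ) * ENNReal.ofReal (C_b * θ ^ (-((N : ℝ) - 1) - ν))) *
              ENNReal.ofReal (r ^ (-((N : ℝ) - 2)))) := by gcongr
      _ = ENNReal.ofReal ((2 : ℝ) ^ (N - 1) / R *
            (F * (r ^ γ * (C_b * θ ^ (-((N : ℝ) - 1) - ν))) * r ^ (-((N : ℝ) - 2)))) := by
          rw [ENNReal.ofReal_mul (le_of_lt (by positivity : (0:ℝ) < (2 : ℝ) ^ (N - 1) / R)),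
            ENNReal.ofReal_mul (mul_nonneg hFnn (le_of_lt (by positivity :
              (0:ℝ) < r ^ γ * (C_b * θ ^ (-((N : ℝ) - 1) - ν))))),
            ENNReal.ofReal_mul hFnn,
            ENNReal.ofReal_mul (le_of_lt (by positivity : (0:ℝ) < r ^ γ))]
      _ ≤ ENNReal.ofReal (C_b * c₀ * (R ^ (-(N : ℝ) - ν) * (F * s ^ (γ + ν + 1)))) :=
          ENNReal.ofReal_le_ofReal hreal
      _ = _ := by
          rw [ENNReal.ofReal_mul hc0,
            ENNReal.ofReal_mul (le_of_lt (Real.rpow_pos_of_pos hRpos _)), ← mul_assoc]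
    · obtain ⟨hblow, hbup⟩ := hbb2 hcos
      obtain ⟨hA1, hA2⟩ := hcase2 hcos
      have hreal : (2 : ℝ) ^ (N - 1) / R *
            (F * (r ^ γ * (C_b * Real.sin θ ^ (γ + ν + 1))) * r ^ (-((N : ℝ) - 2))) ≤
          C_b * c₀ * (R ^ (-(N : ℝ) - ν) * (F * s ^ (γ + ν + 1))) := by
        have step := mul_le_mul_of_nonneg_left hA2 (mul_nonneg hCb0.le hFnn)
        calc (2 : ℝ) ^ (N - 1) / R *
              (F * (r ^ γ * (C_b * Real.sin θ ^ (γ + ν + 1))) * r ^ (-((N : ℝ) - 2)))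
            = C_b * F * ((2 : ℝ) ^ (N - 1) / R *
              (r ^ γ * Real.sin θ ^ (γ + ν + 1) * r ^ (-((N : ℝ) - 2)))) := by ring
        _ ≤ C_b * F * (c₀ * (R ^ (-(N : ℝ) - ν) * s ^ (γ + ν + 1))) := step
        _ = _ := by ring
      calc ENNReal.ofReal ((2 : ℝ) ^ (N - 1) / R) *
            (ENNReal.ofReal F * (ENNReal.ofReal (r ^ γ) * b (Real.cos θ)) *
              ENNReal.ofReal (r ^ (-((N : ℝ) - 2))))
          ≤ ENNReal.ofReal ((2 : ℝ) ^ (N - 1) / R) *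
            (ENNReal.ofReal F *
              (ENNReal.ofReal (r ^ γ) * ENNReal.ofReal (C_b * Real.sin θ ^ (γ + ν + 1))) *
              ENNReal.ofReal (r ^ (-((N : ℝ) - 2)))) := by gcongr
      _ = ENNReal.ofReal ((2 : ℝ) ^ (N - 1) / R *
            (F * (r ^ γ * (C_b * Real.sin θ ^ (γ + ν + 1))) * r ^ (-((N : ℝ) - 2)))) := by
          rw [ENNReal.ofReal_mul (le_of_lt (by positivity : (0:ℝ) < (2 : ℝ) ^ (N - 1) / R)),
            ENNReal.ofReal_mul (mul_nonneg hFnn (le_of_lt (by positivity :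
              (0:ℝ) < r ^ γ * (C_b * Real.sin θ ^ (γ + ν + 1))))),
            ENNReal.ofReal_mul hFnn,
            ENNReal.ofReal_mul (le_of_lt (by positivity : (0:ℝ) < r ^ γ))]
      _ ≤ ENNReal.ofReal (C_b * c₀ * (R ^ (-(N : ℝ) - ν) * (F * s ^ (γ + ν + 1)))) :=
          ENNReal.ofReal_le_ofReal hreal
      _ = _ := by
          rw [ENNReal.ofReal_mul hc0,
            ENNReal.ofReal_mul (le_of_lt (Real.rpow_pos_of_pos hRpos _)), ← mul_assoc]
end
end

section
/- Let N ≥ 1 be an integer and let f : ℝ^N → [0,∞) be measurable satisfying the macroscopic bounds with constants M₁, M₀, E₀, H₀. Then there exist r > 0, ℓ > 0 and m > 0, depending only on N, M₀, M₁, E₀ and H₀, such that the Lebesgue measure of the set {v ∈ B_r : f(v) > ℓ} is at least m. -/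
open MeasureTheory Metric Set
open scoped ENNReal RealInnerProductSpace

noncomputable section

/-- The entropy bound `∫ f log f ≤ H₀`, stated in the extended sense: the positive part of
the integral minus the negative part is at most `H₀` (the inequality is arranged in `ℝ≥0∞`
so that it is meaningful even when the integral is `-∞`). -/
def EntropyLE (N : ℕ) (f : EuclideanSpace ℝ (Fin N) → ℝ) (H₀ : ℝ) : Prop :=
  (∫⁻ v, ENNReal.ofReal (f v * Real.log (f v))) + ENNReal.ofReal (-H₀) ≤
    (∫⁻ v, ENNReal.ofReal (-(f v * Real.log (f v)))) + ENNReal.ofReal H₀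

/-- The macroscopic bounds for the Boltzmann equation: mass between `M₁` and `M₀`,
energy at most `E₀` and entropy at most `H₀`. -/
def MacroBounds (N : ℕ) (f : EuclideanSpace ℝ (Fin N) → ℝ) (M₁ M₀ E₀ H₀ : ℝ) : Prop :=
  ENNReal.ofReal M₁ ≤ (∫⁻ v, ENNReal.ofReal (f v)) ∧
  (∫⁻ v, ENNReal.ofReal (f v)) ≤ ENNReal.ofReal M₀ ∧
  (∫⁻ v, ENNReal.ofReal (‖v‖ ^ 2 * f v)) ≤ ENNReal.ofReal E₀ ∧
  EntropyLE N f H₀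

lemma aux_xlogx {x : ℝ} (hx : 0 < x) : -(x * Real.log x) ≤ 2 * Real.sqrt x := by
  have hs : 0 < Real.sqrt x := Real.sqrt_pos.2 hx
  have h1 : Real.log x = 2 * Real.log (Real.sqrt x) := by
    rw [Real.log_sqrt hx.le]; ring
  have h3 : Real.log (Real.sqrt x)⁻¹ ≤ (Real.sqrt x)⁻¹ - 1 :=
    Real.log_le_sub_one_of_pos (by positivity)
  have h2 : Real.log (Real.sqrt x)⁻¹ = -Real.log (Real.sqrt x) := Real.log_inv _
  calc -(x * Real.log x) = 2 * (x * Real.log (Real.sqrt x)⁻¹) := by rw [h1, h2]; ring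
    _ ≤ 2 * (x * ((Real.sqrt x)⁻¹ - 1)) := by
        have := mul_le_mul_of_nonneg_left h3 hx.le
        linarith
    _ ≤ 2 * (x * (Real.sqrt x)⁻¹) := by nlinarith
    _ = 2 * Real.sqrt x := by rw [← div_eq_mul_inv, Real.div_sqrt]

lemma aux_neg_entropy (n : ℕ) {a x : ℝ} (ha : 0 ≤ a) (hx : 0 ≤ x) :
    -(x * Real.log x) ≤ (n + 1 : ℝ) * ((1 + a ^ 2) * x) + 2 * (1 + a) ^ (-(n + 1 : ℝ)) := by
  have h1a : (0:ℝ) < 1 + a := by linarith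
  have hrp : (0:ℝ) ≤ (1 + a) ^ (-(n + 1 : ℝ)) := Real.rpow_nonneg h1a.le _
  have hn1 : (0:ℝ) < (n:ℝ) + 1 := by positivity
  rcases hx.eq_or_lt with h0 | hxpos
  · rw [← h0]; simp; positivity
  by_cases hone : 1 ≤ x
  · have h := mul_nonneg hx (Real.log_nonneg hone)
    have hR : (0:ℝ) ≤ (n + 1 : ℝ) * ((1 + a ^ 2) * x) := by positivity
    linarith
  set g : ℝ := (1 + a) ^ (-(2 * ((n:ℝ) + 1))) with hg
  have hgpos : 0 < g := Real.rpow_pos_of_pos h1a _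
  have hsqg : Real.sqrt g = (1 + a) ^ (-(n + 1 : ℝ)) := by
    have : g = ((1 + a) ^ (-(n + 1 : ℝ))) ^ 2 := by
      rw [hg, ← Real.rpow_natCast ((1 + a) ^ (-(n + 1 : ℝ))) 2, ← Real.rpow_mul h1a.le]
      norm_num; ring_nf
    rw [this, Real.sqrt_sq hrp]
  by_cases hxg : g ≤ x
  · have hlog : Real.log g ≤ Real.log x := Real.log_le_log hgpos hxg
    have hlg : Real.log g = -(2 * ((n:ℝ) + 1)) * Real.log (1 + a) := Real.log_rpow h1a _
    have hla : Real.log (1 + a) ≤ a := by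
      have := Real.log_le_sub_one_of_pos h1a; linarith
    have hlanonneg : 0 ≤ Real.log (1 + a) := Real.log_nonneg (by linarith)
    have hneg : -Real.log x ≤ 2 * ((n:ℝ) + 1) * a := by
      have : -Real.log x ≤ -Real.log g := by linarith
      rw [hlg] at this
      nlinarith
    have h2a : 2 * a ≤ 1 + a ^ 2 := by nlinarith [sq_nonneg (a - 1)]
    have : -(x * Real.log x) = x * (-Real.log x) := by ring
    rw [this]
    have hb : x * (-Real.log x) ≤ x * (2 * ((n:ℝ) + 1) * a) :=
      mul_le_mul_of_nonneg_left hneg hx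
    have key : x * (2 * ((n:ℝ) + 1) * a) ≤ ((n:ℝ) + 1) * ((1 + a ^ 2) * x) := by
      nlinarith [mul_le_mul_of_nonneg_left h2a (mul_nonneg hn1.le hx)]
    linarith
  · push_neg at hxg
    have h1 : -(x * Real.log x) ≤ 2 * Real.sqrt x := aux_xlogx hxpos
    have h2 : Real.sqrt x ≤ Real.sqrt g := Real.sqrt_le_sqrt hxg.le
    rw [hsqg] at h2
    have hR : (0:ℝ) ≤ (n + 1 : ℝ) * ((1 + a ^ 2) * x) := by positivity
    linarith

/-- **Quantified superlevel set from macroscopic bounds** (Lemma 4.6 of the paper). A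
nonnegative function with mass bounded below by `M₁ > 0` and above by `M₀`, energy bounded
by `E₀` and entropy bounded by `H₀` has a superlevel set `{f > ℓ} ∩ B_r` of measure at
least `m`, where `r`, `ℓ` and `m` depend only on `N`, `M₀`, `M₁`, `E₀` and `H₀`. -/
theorem superlevel_set_from_macroscopic_bounds
    (N : ℕ) (hN : 1 ≤ N) (M₁ M₀ E₀ H₀ : ℝ)
    (hM₁ : 0 < M₁) (hM : M₁ ≤ M₀) (hE₀ : 0 < E₀) :
    ∃ r l m : ℝ, 0 < r ∧ 0 < l ∧ 0 < m ∧
      ∀ f : EuclideanSpace ℝ (Fin N) → ℝ,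
        Measurable f → (∀ v, 0 ≤ f v) →
        MacroBounds N f M₁ M₀ E₀ H₀ →
        ENNReal.ofReal m ≤
          volume {v : EuclideanSpace ℝ (Fin N) |
            v ∈ ball (0 : EuclideanSpace ℝ (Fin N)) r ∧ l < f v} := by
  classical
  have hM₀ : (0:ℝ) < M₀ := hM₁.trans_le hM
  set c : ℝ≥0∞ := ∫⁻ v : EuclideanSpace ℝ (Fin N),
      ENNReal.ofReal ((1 + ‖v‖) ^ (-(N + 1 : ℝ))) with hc
  have hcfin : c < ∞ := by
    refine finite_integral_one_add_norm ?_
    rw [finrank_euclideanSpace_fin]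
    exact lt_add_one _
  set cR := c.toReal with hcRdef
  have hcR : (0:ℝ) ≤ cR := ENNReal.toReal_nonneg
  have hcofReal : ENNReal.ofReal cR = c := ENNReal.ofReal_toReal hcfin.ne
  set C₀ : ℝ := (N + 1) * (M₀ + E₀) + 2 * cR with hC₀
  have hC₀pos : 0 < C₀ := by
    have h1 : (0:ℝ) < (N:ℝ) + 1 := by positivity
    nlinarith
  set H₁ : ℝ := C₀ + max H₀ 0 + 1 with hH₁
  have hH₁pos : 0 < H₁ := by
    have := le_max_right H₀ (0:ℝ); simp only [hH₁]; linarith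
  set r : ℝ := Real.sqrt (4 * E₀ / M₁) with hrdef
  have hrpos : 0 < r := Real.sqrt_pos.2 (by positivity)
  have hr2 : r ^ 2 = 4 * E₀ / M₁ := Real.sq_sqrt (by positivity)
  have hBfin : volume (ball (0 : EuclideanSpace ℝ (Fin N)) r) ≠ ∞ := measure_ball_lt_top.ne
  have hBpos : 0 < volume (ball (0 : EuclideanSpace ℝ (Fin N)) r) :=
    measure_ball_pos _ _ hrpos
  set V : ℝ := (volume (ball (0 : EuclideanSpace ℝ (Fin N)) r)).toReal with hVdef
  have hVpos : 0 < V := ENNReal.toReal_pos hBpos.ne' hBfin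
  have hVof : ENNReal.ofReal V = volume (ball (0 : EuclideanSpace ℝ (Fin N)) r) :=
    ENNReal.ofReal_toReal hBfin
  set l : ℝ := M₁ / (4 * V) with hldef
  have hlpos : 0 < l := by positivity
  set K : ℝ := Real.exp (4 * H₁ / M₁) with hKdef
  have hKpos : 0 < K := Real.exp_pos _
  have hlogK : Real.log K = 4 * H₁ / M₁ := Real.log_exp _
  refine ⟨r, l, M₁ / (4 * K), hrpos, hlpos, by positivity, ?_⟩
  rintro f hmeas hnn ⟨hmass_lo, hmass_hi, henergy, hent⟩
  have hfE : Measurable fun v : EuclideanSpace ℝ (Fin N) => ENNReal.ofReal (f v) :=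
    hmeas.ennreal_ofReal
  -- Step A: bound on the positive part of the entropy
  have hNeg : (∫⁻ v, ENNReal.ofReal (-(f v * Real.log (f v)))) ≤ ENNReal.ofReal C₀ := by
    have e1 : (∫⁻ v : EuclideanSpace ℝ (Fin N),
        ENNReal.ofReal ((N + 1 : ℝ) * ((1 + ‖v‖ ^ 2) * f v))) ≤
        ENNReal.ofReal ((N + 1 : ℝ) * (M₀ + E₀)) := by
      have hpt : ∀ v : EuclideanSpace ℝ (Fin N),
          ENNReal.ofReal ((N + 1 : ℝ) * ((1 + ‖v‖ ^ 2) * f v)) =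
            ENNReal.ofReal (N + 1 : ℝ) *
              (ENNReal.ofReal (f v) + ENNReal.ofReal (‖v‖ ^ 2 * f v)) := by
        intro v
        rw [ENNReal.ofReal_mul (by positivity), ← ENNReal.ofReal_add (hnn v) (mul_nonneg (by positivity) (hnn v))]
        congr 2
        ring
      calc (∫⁻ v : EuclideanSpace ℝ (Fin N),
            ENNReal.ofReal ((N + 1 : ℝ) * ((1 + ‖v‖ ^ 2) * f v)))
          = ∫⁻ v : EuclideanSpace ℝ (Fin N), ENNReal.ofReal (N + 1 : ℝ) *
              (ENNReal.ofReal (f v) + ENNReal.ofReal (‖v‖ ^ 2 * f v)) :=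
            lintegral_congr hpt
        _ = ENNReal.ofReal (N + 1 : ℝ) *
              ∫⁻ v : EuclideanSpace ℝ (Fin N),
                (ENNReal.ofReal (f v) + ENNReal.ofReal (‖v‖ ^ 2 * f v)) :=
            lintegral_const_mul _
              (hfE.add ((measurable_norm.pow_const 2).mul hmeas).ennreal_ofReal)
        _ = ENNReal.ofReal (N + 1 : ℝ) *
              ((∫⁻ v, ENNReal.ofReal (f v)) + ∫⁻ v, ENNReal.ofReal (‖v‖ ^ 2 * f v)) := by
            rw [lintegral_add_left hfE]
        _ ≤ ENNReal.ofReal (N + 1 : ℝ) * (ENNReal.ofReal M₀ + ENNReal.ofReal E₀) :=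
            mul_le_mul_right (add_le_add hmass_hi henergy) _
        _ = ENNReal.ofReal ((N + 1 : ℝ) * (M₀ + E₀)) := by
            rw [← ENNReal.ofReal_add hM₀.le hE₀.le, ← ENNReal.ofReal_mul (by positivity)]
    have e2 : (∫⁻ v : EuclideanSpace ℝ (Fin N),
        ENNReal.ofReal (2 * (1 + ‖v‖) ^ (-(N + 1 : ℝ)))) = ENNReal.ofReal (2 * cR) := by
      have hpt : ∀ v : EuclideanSpace ℝ (Fin N),
          ENNReal.ofReal (2 * (1 + ‖v‖) ^ (-(N + 1 : ℝ))) =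
            ENNReal.ofReal (2:ℝ) * ENNReal.ofReal ((1 + ‖v‖) ^ (-(N + 1 : ℝ))) := fun v =>
        ENNReal.ofReal_mul (by norm_num)
      rw [lintegral_congr hpt,
        lintegral_const_mul _ (by fun_prop : Measurable fun v : EuclideanSpace ℝ (Fin N) =>
          ENNReal.ofReal ((1 + ‖v‖) ^ (-(N + 1 : ℝ)))),
        ← hc, ← hcofReal, ← ENNReal.ofReal_mul (by norm_num)]
    calc (∫⁻ v, ENNReal.ofReal (-(f v * Real.log (f v))))
        ≤ ∫⁻ v : EuclideanSpace ℝ (Fin N),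
            (ENNReal.ofReal ((N + 1 : ℝ) * ((1 + ‖v‖ ^ 2) * f v)) +
              ENNReal.ofReal (2 * (1 + ‖v‖) ^ (-(N + 1 : ℝ)))) := by
          refine lintegral_mono fun v => ?_
          refine le_trans (ENNReal.ofReal_le_ofReal
            (aux_neg_entropy N (norm_nonneg v) (hnn v))) ENNReal.ofReal_add_le
      _ = (∫⁻ v : EuclideanSpace ℝ (Fin N),
            ENNReal.ofReal ((N + 1 : ℝ) * ((1 + ‖v‖ ^ 2) * f v))) +
            ∫⁻ v : EuclideanSpace ℝ (Fin N),
              ENNReal.ofReal (2 * (1 + ‖v‖) ^ (-(N + 1 : ℝ))) :=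
          lintegral_add_left (by fun_prop) _
      _ ≤ ENNReal.ofReal ((N + 1 : ℝ) * (M₀ + E₀)) + ENNReal.ofReal (2 * cR) := by
          rw [e2]; exact add_le_add_left e1 _
      _ = ENNReal.ofReal C₀ := by
          rw [← ENNReal.ofReal_add (by nlinarith) (by positivity)]
  have hP : (∫⁻ v, ENNReal.ofReal (f v * Real.log (f v))) ≤ ENNReal.ofReal H₁ := by
    calc (∫⁻ v, ENNReal.ofReal (f v * Real.log (f v)))
        ≤ (∫⁻ v, ENNReal.ofReal (f v * Real.log (f v))) + ENNReal.ofReal (-H₀) := le_self_add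
      _ ≤ (∫⁻ v, ENNReal.ofReal (-(f v * Real.log (f v)))) + ENNReal.ofReal H₀ := hent
      _ ≤ ENNReal.ofReal C₀ + ENNReal.ofReal (max H₀ 0) :=
          add_le_add hNeg (ENNReal.ofReal_le_ofReal (le_max_left _ _))
      _ = ENNReal.ofReal (C₀ + max H₀ 0) :=
          (ENNReal.ofReal_add hC₀pos.le (le_max_right _ _)).symm
      _ ≤ ENNReal.ofReal H₁ := ENNReal.ofReal_le_ofReal (by simp only [hH₁]; linarith)
  -- Step B : Chebyshev outside the ball
  have hB1 : (∫⁻ v in (ball (0 : EuclideanSpace ℝ (Fin N)) r)ᶜ, ENNReal.ofReal (f v)) ≤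
      ENNReal.ofReal (M₁ / 4) := by
    have key : ENNReal.ofReal (r ^ 2) *
        ∫⁻ v in (ball (0 : EuclideanSpace ℝ (Fin N)) r)ᶜ, ENNReal.ofReal (f v) ≤
        ENNReal.ofReal E₀ := by
      rw [← lintegral_const_mul _ hfE]
      calc (∫⁻ v in (ball (0 : EuclideanSpace ℝ (Fin N)) r)ᶜ,
            ENNReal.ofReal (r ^ 2) * ENNReal.ofReal (f v))
          = ∫⁻ v in (ball (0 : EuclideanSpace ℝ (Fin N)) r)ᶜ,
              ENNReal.ofReal (r ^ 2 * f v) :=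
            lintegral_congr fun v => (ENNReal.ofReal_mul (by positivity)).symm
        _ ≤ ∫⁻ v in (ball (0 : EuclideanSpace ℝ (Fin N)) r)ᶜ,
              ENNReal.ofReal (‖v‖ ^ 2 * f v) := by
            refine setLIntegral_mono' measurableSet_ball.compl fun v hv => ?_
            rw [mem_compl_iff, mem_ball, dist_zero_right, not_lt] at hv
            refine ENNReal.ofReal_le_ofReal
              (mul_le_mul_of_nonneg_right ?_ (hnn v))
            exact pow_le_pow_left₀ hrpos.le hv 2
        _ ≤ ∫⁻ v, ENNReal.ofReal (‖v‖ ^ 2 * f v) := setLIntegral_le_lintegral _ _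
        _ ≤ ENNReal.ofReal E₀ := henergy
    have heq : ENNReal.ofReal E₀ = ENNReal.ofReal (r ^ 2) * ENNReal.ofReal (M₁ / 4) := by
      rw [← ENNReal.ofReal_mul (by positivity)]
      congr 1
      rw [hr2]
      field_simp
    rw [heq] at key
    exact (ENNReal.mul_le_mul_iff_right (ENNReal.ofReal_pos.2 (by positivity)).ne'
      ENNReal.ofReal_ne_top).mp key
  -- Step C : the small-value part inside the ball
  have hs₂m : MeasurableSet (ball (0 : EuclideanSpace ℝ (Fin N)) r ∩ {v | f v ≤ l}) :=
    measurableSet_ball.inter (measurableSet_le hmeas measurable_const)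
  have hB2 : (∫⁻ v in ball (0 : EuclideanSpace ℝ (Fin N)) r ∩ {v | f v ≤ l},
      ENNReal.ofReal (f v)) ≤ ENNReal.ofReal (M₁ / 4) := by
    calc (∫⁻ v in ball (0 : EuclideanSpace ℝ (Fin N)) r ∩ {v | f v ≤ l},
          ENNReal.ofReal (f v))
        ≤ ∫⁻ _ in ball (0 : EuclideanSpace ℝ (Fin N)) r ∩ {v | f v ≤ l},
            ENNReal.ofReal l :=
          setLIntegral_mono' hs₂m fun v hv => ENNReal.ofReal_le_ofReal hv.2
      _ = ENNReal.ofReal l *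
            volume (ball (0 : EuclideanSpace ℝ (Fin N)) r ∩ {v | f v ≤ l}) :=
          setLIntegral_const _ _
      _ ≤ ENNReal.ofReal l * volume (ball (0 : EuclideanSpace ℝ (Fin N)) r) :=
          mul_le_mul_right (measure_mono inter_subset_left) _
      _ = ENNReal.ofReal (l * V) := by rw [← hVof, ← ENNReal.ofReal_mul hlpos.le]
      _ ≤ ENNReal.ofReal (M₁ / 4) := by
          refine ENNReal.ofReal_le_ofReal (le_of_eq ?_)
          rw [hldef]
          field_simp
  -- Step D : the large-value part via the entropy bound
  have hs₃m : MeasurableSet {v : EuclideanSpace ℝ (Fin N) | K < f v} :=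
    measurableSet_lt measurable_const hmeas
  have hB3 : (∫⁻ v in {v : EuclideanSpace ℝ (Fin N) | K < f v}, ENNReal.ofReal (f v)) ≤
      ENNReal.ofReal (M₁ / 4) := by
    have hlogKpos : 0 < Real.log K := by rw [hlogK]; positivity
    have key : ENNReal.ofReal (Real.log K) *
        ∫⁻ v in {v : EuclideanSpace ℝ (Fin N) | K < f v}, ENNReal.ofReal (f v) ≤
        ENNReal.ofReal H₁ := by
      rw [← lintegral_const_mul _ hfE]
      calc (∫⁻ v in {v : EuclideanSpace ℝ (Fin N) | K < f v},
            ENNReal.ofReal (Real.log K) * ENNReal.ofReal (f v))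
          = ∫⁻ v in {v : EuclideanSpace ℝ (Fin N) | K < f v},
              ENNReal.ofReal (Real.log K * f v) :=
            lintegral_congr fun v => (ENNReal.ofReal_mul hlogKpos.le).symm
        _ ≤ ∫⁻ v in {v : EuclideanSpace ℝ (Fin N) | K < f v},
              ENNReal.ofReal (f v * Real.log (f v)) := by
            refine setLIntegral_mono' hs₃m fun v hv => ?_
            have hKf : K ≤ f v := le_of_lt hv
            have hlog := Real.log_le_log hKpos hKf
            refine ENNReal.ofReal_le_ofReal ?_
            calc Real.log K * f v = f v * Real.log K := mul_comm _ _
              _ ≤ f v * Real.log (f v) := mul_le_mul_of_nonneg_left hlog (hnn v)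
        _ ≤ ∫⁻ v, ENNReal.ofReal (f v * Real.log (f v)) := setLIntegral_le_lintegral _ _
        _ ≤ ENNReal.ofReal H₁ := hP
    have heq : ENNReal.ofReal H₁ = ENNReal.ofReal (Real.log K) * ENNReal.ofReal (M₁ / 4) := by
      rw [← ENNReal.ofReal_mul hlogKpos.le]
      congr 1
      rw [hlogK]
      field_simp
    rw [heq] at key
    exact (ENNReal.mul_le_mul_iff_right (ENNReal.ofReal_pos.2 hlogKpos).ne'
      ENNReal.ofReal_ne_top).mp key
  -- Step E : combine
  have hs₄m : MeasurableSet (ball (0 : EuclideanSpace ℝ (Fin N)) r ∩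
      {v | l < f v ∧ f v ≤ K}) :=
    measurableSet_ball.inter
      ((measurableSet_lt measurable_const hmeas).inter (measurableSet_le hmeas measurable_const))
  have hB4 : (∫⁻ v in ball (0 : EuclideanSpace ℝ (Fin N)) r ∩ {v | l < f v ∧ f v ≤ K},
      ENNReal.ofReal (f v)) ≤
      ENNReal.ofReal K * volume {v : EuclideanSpace ℝ (Fin N) |
        v ∈ ball (0 : EuclideanSpace ℝ (Fin N)) r ∧ l < f v} := by
    calc (∫⁻ v in ball (0 : EuclideanSpace ℝ (Fin N)) r ∩ {v | l < f v ∧ f v ≤ K},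
          ENNReal.ofReal (f v))
        ≤ ∫⁻ _ in ball (0 : EuclideanSpace ℝ (Fin N)) r ∩ {v | l < f v ∧ f v ≤ K},
            ENNReal.ofReal K :=
          setLIntegral_mono' hs₄m fun v hv => ENNReal.ofReal_le_ofReal hv.2.2
      _ = ENNReal.ofReal K *
            volume (ball (0 : EuclideanSpace ℝ (Fin N)) r ∩ {v | l < f v ∧ f v ≤ K}) :=
          setLIntegral_const _ _
      _ ≤ ENNReal.ofReal K * volume {v : EuclideanSpace ℝ (Fin N) |
            v ∈ ball (0 : EuclideanSpace ℝ (Fin N)) r ∧ l < f v} := by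
          apply mul_le_mul_right
          apply measure_mono
          intro v hv
          exact ⟨hv.1, hv.2.1⟩
  have hcover : (univ : Set (EuclideanSpace ℝ (Fin N))) ⊆
      (ball (0 : EuclideanSpace ℝ (Fin N)) r)ᶜ ∪
        ((ball (0 : EuclideanSpace ℝ (Fin N)) r ∩ {v | f v ≤ l}) ∪
          ({v : EuclideanSpace ℝ (Fin N) | K < f v} ∪
            (ball (0 : EuclideanSpace ℝ (Fin N)) r ∩ {v | l < f v ∧ f v ≤ K}))) := by
    intro v _
    by_cases hv : v ∈ ball (0 : EuclideanSpace ℝ (Fin N)) r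
    · by_cases hfl : f v ≤ l
      · exact Or.inr (Or.inl ⟨hv, hfl⟩)
      · by_cases hfK : K < f v
        · exact Or.inr (Or.inr (Or.inl hfK))
        · exact Or.inr (Or.inr (Or.inr ⟨hv, lt_of_not_ge hfl, le_of_not_gt hfK⟩))
    · exact Or.inl hv
  have hmain : ENNReal.ofReal M₁ ≤ ENNReal.ofReal (3 * (M₁ / 4)) +
      ENNReal.ofReal K * volume {v : EuclideanSpace ℝ (Fin N) |
        v ∈ ball (0 : EuclideanSpace ℝ (Fin N)) r ∧ l < f v} := by
    have step : ENNReal.ofReal M₁ ≤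
        ENNReal.ofReal (M₁ / 4) + (ENNReal.ofReal (M₁ / 4) + (ENNReal.ofReal (M₁ / 4) +
          ENNReal.ofReal K * volume {v : EuclideanSpace ℝ (Fin N) |
            v ∈ ball (0 : EuclideanSpace ℝ (Fin N)) r ∧ l < f v})) := by
      calc ENNReal.ofReal M₁ ≤ ∫⁻ v, ENNReal.ofReal (f v) := hmass_lo
        _ = ∫⁻ v in (univ : Set (EuclideanSpace ℝ (Fin N))), ENNReal.ofReal (f v) :=
            (setLIntegral_univ _).symm
        _ ≤ ∫⁻ v in (ball (0 : EuclideanSpace ℝ (Fin N)) r)ᶜ ∪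
              ((ball (0 : EuclideanSpace ℝ (Fin N)) r ∩ {v | f v ≤ l}) ∪
                ({v : EuclideanSpace ℝ (Fin N) | K < f v} ∪
                  (ball (0 : EuclideanSpace ℝ (Fin N)) r ∩ {v | l < f v ∧ f v ≤ K}))),
              ENNReal.ofReal (f v) := lintegral_mono_set hcover
        _ ≤ (∫⁻ v in (ball (0 : EuclideanSpace ℝ (Fin N)) r)ᶜ, ENNReal.ofReal (f v)) +
              ∫⁻ v in (ball (0 : EuclideanSpace ℝ (Fin N)) r ∩ {v | f v ≤ l}) ∪
                ({v : EuclideanSpace ℝ (Fin N) | K < f v} ∪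
                  (ball (0 : EuclideanSpace ℝ (Fin N)) r ∩ {v | l < f v ∧ f v ≤ K})),
                ENNReal.ofReal (f v) := lintegral_union_le _ _ _
        _ ≤ (∫⁻ v in (ball (0 : EuclideanSpace ℝ (Fin N)) r)ᶜ, ENNReal.ofReal (f v)) +
              ((∫⁻ v in ball (0 : EuclideanSpace ℝ (Fin N)) r ∩ {v | f v ≤ l},
                ENNReal.ofReal (f v)) +
                ∫⁻ v in {v : EuclideanSpace ℝ (Fin N) | K < f v} ∪
                  (ball (0 : EuclideanSpace ℝ (Fin N)) r ∩ {v | l < f v ∧ f v ≤ K}),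
                  ENNReal.ofReal (f v)) :=
            add_le_add_right (lintegral_union_le _ _ _) _
        _ ≤ (∫⁻ v in (ball (0 : EuclideanSpace ℝ (Fin N)) r)ᶜ, ENNReal.ofReal (f v)) +
              ((∫⁻ v in ball (0 : EuclideanSpace ℝ (Fin N)) r ∩ {v | f v ≤ l},
                ENNReal.ofReal (f v)) +
                ((∫⁻ v in {v : EuclideanSpace ℝ (Fin N) | K < f v}, ENNReal.ofReal (f v)) +
                  ∫⁻ v in ball (0 : EuclideanSpace ℝ (Fin N)) r ∩ {v | l < f v ∧ f v ≤ K},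
                    ENNReal.ofReal (f v))) :=
            add_le_add_right (add_le_add_right (lintegral_union_le _ _ _) _) _
        _ ≤ ENNReal.ofReal (M₁ / 4) + (ENNReal.ofReal (M₁ / 4) + (ENNReal.ofReal (M₁ / 4) +
              ENNReal.ofReal K * volume {v : EuclideanSpace ℝ (Fin N) |
                v ∈ ball (0 : EuclideanSpace ℝ (Fin N)) r ∧ l < f v})) :=
            add_le_add hB1 (add_le_add hB2 (add_le_add hB3 hB4))
    refine step.trans (le_of_eq ?_)
    have : ENNReal.ofReal (M₁ / 4) + ENNReal.ofReal (M₁ / 4) + ENNReal.ofReal (M₁ / 4) =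
        ENNReal.ofReal (3 * (M₁ / 4)) := by
      rw [← ENNReal.ofReal_add (by positivity) (by positivity),
        ← ENNReal.ofReal_add (by positivity) (by positivity)]
      congr 1
      ring
    rw [← this]
    ring
  have hfinal : ENNReal.ofReal (M₁ / 4) ≤
      ENNReal.ofReal K * volume {v : EuclideanSpace ℝ (Fin N) |
        v ∈ ball (0 : EuclideanSpace ℝ (Fin N)) r ∧ l < f v} := by
    rw [show ENNReal.ofReal M₁ = ENNReal.ofReal (3 * (M₁ / 4)) + ENNReal.ofReal (M₁ / 4) by
      rw [← ENNReal.ofReal_add (by positivity) (by positivity)]; congr 1; ring] at hmain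
    exact (ENNReal.add_le_add_iff_left ENNReal.ofReal_ne_top).mp hmain
  have hmm : ENNReal.ofReal K * ENNReal.ofReal (M₁ / (4 * K)) = ENNReal.ofReal (M₁ / 4) := by
    rw [← ENNReal.ofReal_mul hKpos.le]
    congr 1
    field_simp
  refine (ENNReal.mul_le_mul_iff_right (ENNReal.ofReal_pos.2 hKpos).ne'
    ENNReal.ofReal_ne_top).mp ?_
  rw [hmm]
  exact hfinal
end
end

section
/- Let N ≥ 2 be an integer and u ∈ ℝ^N ∖ {0}, and let H = {w ∈ ℝ^N : w·u = 0} be the hyperplane orthogonal to u. Define ψ : H → S^{N−1} by ψ(w) = 2|u|(u+w)/(|u|² + |w|²) − u/|u|. Then ψ is a bijection from H onto S^{N−1} ∖ {−u/|u|}, and for every measurable h : S^{N−1} → [0,∞]: ∫_{S^{N−1}} h(σ) dσ = 2^{N−1} |u|^{N−1} ∫_H h(ψ(w)) (|u|² + |w|²)^{−(N−1)} dS(w), where dσ is the surface measure on S^{N−1} and dS is the (N−1)-dimensional Hausdorff measure on H. -/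
open MeasureTheory Metric Set
open scoped ENNReal RealInnerProductSpace Topology

noncomputable section

namespace StereoAux

variable {N : ℕ} (u : EuclideanSpace ℝ (Fin N))

abbrev E (N : ℕ) := EuclideanSpace ℝ (Fin N)

def lam (w : E N) : ℝ := (2 * ‖u‖) / (‖u‖ ^ 2 + ‖w‖ ^ 2)

def psi (w : E N) : E N := lam u w • (u + w) - ‖u‖⁻¹ • u

def chi (σ : E N) : E N := (‖u‖ / (1 + ⟪σ, ‖u‖⁻¹ • u⟫)) • (σ + ‖u‖⁻¹ • u) - u

def Hyp : Set (E N) := {w : E N | ⟪w, u⟫ = 0}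

variable {u}

section algebra

variable (hu : u ≠ 0)
include hu

lemma normu_pos : (0:ℝ) < ‖u‖ := norm_pos_iff.2 hu

lemma denom_pos (w : E N) : (0:ℝ) < ‖u‖ ^ 2 + ‖w‖ ^ 2 := by
  have := normu_pos hu; positivity

lemma lam_pos (w : E N) : 0 < lam u w := by
  have h1 := normu_pos hu; have h2 := denom_pos hu w
  exact div_pos (by linarith) h2

lemma lam_le (w : E N) : lam u w ≤ 2 / ‖u‖ := by
  have h1 := normu_pos hu
  rw [lam, div_le_div_iff₀ (denom_pos hu w) h1]
  nlinarith [sq_nonneg ‖w‖]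

omit hu in
lemma norm_add_orth {w : E N} (hw : ⟪w, u⟫ = 0) : ‖u + w‖ ^ 2 = ‖u‖ ^ 2 + ‖w‖ ^ 2 := by
  have hw2 : ⟪u, w⟫ = 0 := by rw [real_inner_comm]; exact hw
  rw [← real_inner_self_eq_norm_sq]
  rw [inner_add_add_self, hw2, hw, real_inner_self_eq_norm_sq, real_inner_self_eq_norm_sq]
  ring

omit hu in
lemma norm_smul_sub_smul (a b : ℝ) (x y : E N) :
    ‖a • x - b • y‖ ^ 2 = a ^ 2 * ‖x‖ ^ 2 - 2 * (a * b) * ⟪x, y⟫ + b ^ 2 * ‖y‖ ^ 2 := by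
  rw [← real_inner_self_eq_norm_sq, inner_sub_sub_self]
  simp only [real_inner_smul_left, real_inner_smul_right]
  rw [real_inner_self_eq_norm_sq, real_inner_self_eq_norm_sq, real_inner_comm y x]
  ring

lemma norm_psi_sq {w : E N} (hw : ⟪w, u⟫ = 0) : ‖psi u w‖ ^ 2 = 1 := by
  have h1 : ⟪u + w, u⟫ = ‖u‖ ^ 2 := by
    rw [inner_add_left, hw, real_inner_self_eq_norm_sq]; ring
  have hR := normu_pos hu
  have hP := denom_pos hu w
  rw [psi, norm_smul_sub_smul, norm_add_orth hw, h1]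
  simp only [lam]
  field_simp
  ring

lemma norm_psi {w : E N} (hw : ⟪w, u⟫ = 0) : ‖psi u w‖ = 1 := by
  rw [← Real.sqrt_sq (norm_nonneg (psi u w)), norm_psi_sq hu hw, Real.sqrt_one]

lemma dist_psi_sq {w w' : E N} (hw : ⟪w, u⟫ = 0) (hw' : ⟪w', u⟫ = 0) :
    ‖psi u w - psi u w'‖ ^ 2 = lam u w * lam u w' * ‖w - w'‖ ^ 2 := by
  have hR := normu_pos hu
  have hP := denom_pos hu w
  have hP' := denom_pos hu w'
  have hd : psi u w - psi u w' = lam u w • (u + w) - lam u w' • (u + w') := by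
    rw [psi, psi, sub_sub_sub_cancel_right]
  have hw2 : ⟪u, w'⟫ = 0 := by rw [real_inner_comm]; exact hw'
  have h1 : ⟪u + w, u + w'⟫ = ‖u‖ ^ 2 + ⟪w, w'⟫ := by
    rw [inner_add_left, inner_add_right, inner_add_right, hw2, hw, real_inner_self_eq_norm_sq]
    ring
  have h2 : ‖w - w'‖ ^ 2 = ‖w‖ ^ 2 - 2 * ⟪w, w'⟫ + ‖w'‖ ^ 2 := by
    rw [← real_inner_self_eq_norm_sq, inner_sub_sub_self, real_inner_self_eq_norm_sq,
      real_inner_self_eq_norm_sq, real_inner_comm w' w]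
    ring
  rw [hd, norm_smul_sub_smul, norm_add_orth hw, norm_add_orth hw', h1, h2]
  simp only [lam]
  field_simp
  ring

lemma dist_psi {w w' : E N} (hw : ⟪w, u⟫ = 0) (hw' : ⟪w', u⟫ = 0) :
    dist (psi u w) (psi u w') = Real.sqrt (lam u w * lam u w') * dist w w' := by
  have h0 : (0:ℝ) ≤ lam u w * lam u w' := le_of_lt (mul_pos (lam_pos hu w) (lam_pos hu w'))
  have := dist_psi_sq hu hw hw'
  rw [dist_eq_norm, dist_eq_norm, ← Real.sqrt_sq (norm_nonneg (psi u w - psi u w')), this,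
    Real.sqrt_mul h0, Real.sqrt_sq (norm_nonneg _)]

omit hu in
lemma add_ne_zero_of_orth (hu : u ≠ 0) {w : E N} (hw : ⟪w, u⟫ = 0) : u + w ≠ 0 := by
  intro h
  have h2 := norm_add_orth (u := u) (N := N) hw
  rw [h, norm_zero] at h2
  have := denom_pos hu w
  nlinarith

lemma psi_ne {w : E N} (hw : ⟪w, u⟫ = 0) : psi u w ≠ -(‖u‖⁻¹ • u) := by
  intro h
  have h0 : lam u w • (u + w) = -(‖u‖⁻¹ • u) + ‖u‖⁻¹ • u := by
    rw [psi] at h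
    exact sub_eq_iff_eq_add.mp h
  rw [neg_add_cancel] at h0
  rcases smul_eq_zero.1 h0 with h1 | h1
  · exact absurd h1 (ne_of_gt (lam_pos hu w))
  · exact add_ne_zero_of_orth hu hw h1

lemma chi_psi {w : E N} (hw : ⟪w, u⟫ = 0) : chi u (psi u w) = w := by
  have hR := normu_pos hu
  have hl := lam_pos hu w
  have h1 : ⟪psi u w, ‖u‖⁻¹ • u⟫ = lam u w * ‖u‖ - 1 := by
    have e : ⟪u + w, u⟫ = ‖u‖ ^ 2 := by
      rw [inner_add_left, hw, real_inner_self_eq_norm_sq]; ring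
    rw [psi, inner_sub_left, real_inner_smul_left, real_inner_smul_right, e,
      real_inner_smul_left, real_inner_smul_right, real_inner_self_eq_norm_sq]
    field_simp
  have h2 : 1 + ⟪psi u w, ‖u‖⁻¹ • u⟫ = lam u w * ‖u‖ := by rw [h1]; ring
  have h3 : psi u w + ‖u‖⁻¹ • u = lam u w • (u + w) := by rw [psi, sub_add_cancel]
  rw [chi, h2, h3, smul_smul]
  have h4 : ‖u‖ / (lam u w * ‖u‖) * lam u w = 1 := by
    rw [mul_comm (lam u w) ‖u‖]
    field_simp
  rw [h4, one_smul, add_sub_cancel_left]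

lemma injOn_psi : InjOn (psi u) (Hyp u) := fun w hw w' hw' h => by
  rw [← chi_psi hu hw, ← chi_psi hu hw', h]

lemma surj_psi {σ : E N} (hσ : ‖σ‖ = 1) (hσ' : σ ≠ -(‖u‖⁻¹ • u)) :
    chi u σ ∈ Hyp u ∧ psi u (chi u σ) = σ := by
  have hR := normu_pos hu
  set t : ℝ := 1 + ⟪σ, ‖u‖⁻¹ • u⟫ with ht_def
  have hnu : ‖(‖u‖⁻¹ • u : E N)‖ = 1 := by
    rw [norm_smul, Real.norm_eq_abs, abs_of_pos (inv_pos.2 hR)]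
    field_simp
  have hcomm : ⟪(‖u‖⁻¹ • u : E N), σ⟫ = ⟪σ, ‖u‖⁻¹ • u⟫ := real_inner_comm _ _
  have h2t : ‖σ + ‖u‖⁻¹ • u‖ ^ 2 = 2 * t := by
    rw [← real_inner_self_eq_norm_sq, inner_add_add_self, real_inner_self_eq_norm_sq,
      real_inner_self_eq_norm_sq, hσ, hnu, ht_def]
    linarith [hcomm]
  have hne : σ + ‖u‖⁻¹ • u ≠ 0 := by
    intro h
    exact hσ' (add_eq_zero_iff_eq_neg.1 h)
  have ht : 0 < t := by
    have h5 : 0 < ‖σ + ‖u‖⁻¹ • u‖ := norm_pos_iff.2 hne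
    have h6 := pow_pos h5 2
    rw [h2t] at h6
    linarith
  have hσu : ⟪σ, u⟫ = ‖u‖ * (t - 1) := by
    have hs : ⟪σ, ‖u‖⁻¹ • u⟫ = ‖u‖⁻¹ * ⟪σ, u⟫ := real_inner_smul_right σ u ‖u‖⁻¹
    rw [ht_def, hs]
    have e : ‖u‖ * (1 + ‖u‖⁻¹ * ⟪σ, u⟫ - 1) = (‖u‖ * ‖u‖⁻¹) * ⟪σ, u⟫ := by ring
    rw [e, mul_inv_cancel₀ (ne_of_gt hR), one_mul]
  have hH : ⟪chi u σ, u⟫ = 0 := by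
    rw [chi, inner_sub_left, real_inner_smul_left, inner_add_left, real_inner_smul_left,
      real_inner_self_eq_norm_sq, hσu, ← ht_def]
    field_simp
    ring
  refine ⟨hH, ?_⟩
  have hsum : u + chi u σ = (‖u‖ / t) • (σ + ‖u‖⁻¹ • u) := by
    rw [chi, add_sub_cancel]
  have hns : ‖u‖ ^ 2 + ‖chi u σ‖ ^ 2 = 2 * ‖u‖ ^ 2 / t := by
    have e1 : ‖u + chi u σ‖ ^ 2 = ‖u‖ ^ 2 + ‖chi u σ‖ ^ 2 := norm_add_orth hH
    have e2 : ‖u + chi u σ‖ ^ 2 = (‖u‖ / t) ^ 2 * (2 * t) := by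
      rw [hsum, norm_smul, Real.norm_eq_abs, mul_pow, sq_abs, h2t]
    rw [← e1, e2]
    field_simp
  rw [psi, lam, hns, hsum, smul_smul]
  have h6 : 2 * ‖u‖ / (2 * ‖u‖ ^ 2 / t) * (‖u‖ / t) = 1 := by field_simp
  rw [h6, one_smul, add_sub_cancel_right]

lemma continuous_lam : Continuous (lam u) := by
  apply Continuous.div continuous_const
  · exact continuous_const.add ((continuous_norm).pow 2)
  · exact fun w => ne_of_gt (denom_pos hu w)

lemma continuous_psi : Continuous (psi u) := by
  exact ((continuous_lam hu).smul (continuous_const.add continuous_id)).sub continuous_const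

omit hu in
lemma measurableSet_hyp : MeasurableSet (Hyp u) := by
  have : IsClosed (Hyp u) :=
    isClosed_eq (Continuous.inner continuous_id continuous_const) continuous_const
  exact this.measurableSet

lemma step1 {A : Set (E N)} (hA : A ⊆ Hyp u) {a b : ℝ} (ha : 0 < a)
    (hbd : ∀ w ∈ A, a ≤ lam u w ∧ lam u w ≤ b) {d : ℝ} (hd : 0 ≤ d) :
    ENNReal.ofReal a ^ d * μH[d] A ≤ μH[d] (psi u '' A) ∧
      μH[d] (psi u '' A) ≤ ENNReal.ofReal b ^ d * μH[d] A := by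
  have hlip : LipschitzOnWith b.toNNReal (psi u) A := by
    rw [lipschitzOnWith_iff_dist_le_mul]
    intro x hx y hy
    have hbx := hbd x hx
    have hby := hbd y hy
    have hb0 : 0 ≤ b := le_trans (le_trans ha.le hbx.1) hbx.2
    rw [dist_psi hu (hA hx) (hA hy), Real.coe_toNNReal b hb0]
    apply mul_le_mul_of_nonneg_right _ dist_nonneg
    calc Real.sqrt (lam u x * lam u y) ≤ Real.sqrt (b * b) := by
          apply Real.sqrt_le_sqrt
          exact mul_le_mul hbx.2 hby.2 (le_trans ha.le hby.1) hb0
      _ = b := Real.sqrt_mul_self hb0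
  have hlipinv : LipschitzOnWith (a⁻¹).toNNReal (chi u) (psi u '' A) := by
    rw [lipschitzOnWith_iff_dist_le_mul]
    rintro σ ⟨x, hx, rfl⟩ τ ⟨y, hy, rfl⟩
    rw [chi_psi hu (hA hx), chi_psi hu (hA hy), dist_psi hu (hA hx) (hA hy),
      Real.coe_toNNReal _ (inv_nonneg.2 ha.le)]
    have hax := (hbd x hx).1
    have hay := (hbd y hy).1
    have : a * dist x y ≤ Real.sqrt (lam u x * lam u y) * dist x y := by
      apply mul_le_mul_of_nonneg_right _ dist_nonneg
      calc a = Real.sqrt (a * a) := (Real.sqrt_mul_self ha.le).symm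
        _ ≤ Real.sqrt (lam u x * lam u y) := by
            apply Real.sqrt_le_sqrt
            exact mul_le_mul hax hay ha.le (le_trans ha.le hax)
    calc dist x y = a⁻¹ * (a * dist x y) := by field_simp
      _ ≤ a⁻¹ * (Real.sqrt (lam u x * lam u y) * dist x y) := by
          exact mul_le_mul_of_nonneg_left this (inv_nonneg.2 ha.le)
  have himg : chi u '' (psi u '' A) = A := by
    rw [← Set.image_comp]
    calc (chi u ∘ psi u) '' A = id '' A :=
          Set.image_congr (fun w hw => chi_psi hu (hA hw))
      _ = A := Set.image_id A
  have hup := hlip.hausdorffMeasure_image_le hd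
  have hlow := hlipinv.hausdorffMeasure_image_le hd
  rw [himg] at hlow
  have hcoe : ∀ r : ℝ, ((Real.toNNReal r : NNReal) : ℝ≥0∞) = ENNReal.ofReal r := fun _ => rfl
  rw [hcoe] at hup hlow
  constructor
  · calc ENNReal.ofReal a ^ d * μH[d] A
        ≤ ENNReal.ofReal a ^ d * (ENNReal.ofReal a⁻¹ ^ d * μH[d] (psi u '' A)) := by gcongr
      _ = μH[d] (psi u '' A) := by
          rw [← mul_assoc, ← ENNReal.mul_rpow_of_nonneg _ _ hd, ← ENNReal.ofReal_mul ha.le,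
            mul_inv_cancel₀ (ne_of_gt ha), ENNReal.ofReal_one, ENNReal.one_rpow, one_mul]
  · exact hup

/-- annulus where `lam` is pinned within ratio `c`. -/
def Ann (c : ℝ) (k : ℕ) : Set (E N) :=
  Hyp u ∩ lam u ⁻¹' Set.Ioc (2 / ‖u‖ / c ^ (k + 1)) (2 / ‖u‖ / c ^ k)

lemma measurableSet_Ann (c : ℝ) (k : ℕ) : MeasurableSet (Ann (u := u) c k) :=
  measurableSet_hyp.inter (((continuous_lam hu).measurable) measurableSet_Ioc)

lemma disjoint_Ann {c : ℝ} (hc : 1 < c) : Pairwise (Function.onFun Disjoint (Ann (u := u) c)) := by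
  have hR := normu_pos hu
  have hM : 0 < 2 / ‖u‖ := by positivity
  have key : ∀ i j : ℕ, i < j →
      Disjoint (Ann (u := u) c i) (Ann (u := u) c j) := by
    intro i j hij
    have hd : Disjoint (Set.Ioc (2 / ‖u‖ / c ^ (i + 1)) (2 / ‖u‖ / c ^ i))
        (Set.Ioc (2 / ‖u‖ / c ^ (j + 1)) (2 / ‖u‖ / c ^ j)) := by
      rw [Set.Ioc_disjoint_Ioc]
      have h1 : 2 / ‖u‖ / c ^ j ≤ 2 / ‖u‖ / c ^ (i + 1) :=
        div_le_div_of_nonneg_left hM.le (pow_pos (lt_trans one_pos hc) (i + 1))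
          (pow_le_pow_right₀ hc.le (by omega))
      exact le_trans (min_le_right _ _) (le_trans h1 (le_max_left _ _))
    exact Disjoint.mono Set.inter_subset_right Set.inter_subset_right (hd.preimage (lam u))
  intro i j hij
  rcases lt_or_gt_of_ne hij with h | h
  · exact key i j h
  · exact (key j i h).symm

lemma cover_Ann {c : ℝ} (hc : 1 < c) : Hyp u ⊆ ⋃ k, Ann (u := u) c k := by
  intro w hw
  have hw' : ⟪w, u⟫ = 0 := hw
  have h0 : 0 < lam u w := lam_pos hu w
  have hM : lam u w ≤ 2 / ‖u‖ := lam_le hu w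
  have hex : ∃ k : ℕ, 2 / ‖u‖ / c ^ (k + 1) < lam u w := by
    have htend : Filter.Tendsto (fun k : ℕ => c ^ k) Filter.atTop Filter.atTop :=
      tendsto_pow_atTop_atTop_of_one_lt hc
    obtain ⟨k, hk⟩ := (htend.eventually_gt_atTop ((2 / ‖u‖) / lam u w)).exists
    refine ⟨k, ?_⟩
    rw [div_lt_iff₀ (pow_pos (lt_trans one_pos hc) _)]
    rw [div_lt_iff₀ h0] at hk
    have : c ^ k ≤ c ^ (k + 1) := pow_le_pow_right₀ hc.le (Nat.le_succ k)
    nlinarith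
  classical
  have hk := Nat.find_spec hex
  refine Set.mem_iUnion.2 ⟨Nat.find hex, hw, hk, ?_⟩
  rcases Nat.eq_zero_or_pos (Nat.find hex) with h0' | h0'
  · rw [h0']
    simpa using hM
  · obtain ⟨m, hm⟩ := Nat.exists_eq_succ_of_ne_zero (Nat.pos_iff_ne_zero.1 h0')
    rw [hm]
    have hmin := Nat.find_min hex (show m < Nat.find hex by omega)
    exact not_lt.1 hmin

lemma step2 {d : ℝ} (hd : 0 ≤ d) {T : Set (E N)} (hT : T ⊆ Hyp u) (hTm : MeasurableSet T)
    {c : ℝ} (hc : 1 < c) :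
    μH[d] (psi u '' T) ≤
        ENNReal.ofReal c ^ d * ∫⁻ w in T, ENNReal.ofReal (lam u w) ^ d ∂μH[d] ∧
      (∫⁻ w in T, ENNReal.ofReal (lam u w) ^ d ∂μH[d]) ≤
        ENNReal.ofReal c ^ d * μH[d] (psi u '' T) := by
  classical
  have hR := normu_pos hu
  set S : ℕ → Set (E N) := fun k => T ∩ Ann (u := u) c k with hS
  have hSm : ∀ k, MeasurableSet (S k) := fun k => hTm.inter (measurableSet_Ann hu c k)
  have hSsub : ∀ k, S k ⊆ Hyp u := fun k =>
    Set.inter_subset_right.trans Set.inter_subset_left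
  have hdisj : Pairwise (Function.onFun Disjoint S) := fun i j hij =>
    Disjoint.mono Set.inter_subset_right Set.inter_subset_right (disjoint_Ann hu hc hij)
  have hcover : T = ⋃ k, S k := by
    rw [hS, ← Set.inter_iUnion]
    exact (Set.inter_eq_left.2 (hT.trans (cover_Ann hu hc))).symm
  have hIm : ∀ k, MeasurableSet (psi u '' S k) := fun k =>
    (hSm k).image_of_continuousOn_injOn (continuous_psi hu).continuousOn
      ((injOn_psi hu).mono (hSsub k))
  have hIdisj : Pairwise (Function.onFun Disjoint fun k => psi u '' S k) := by
    intro i j hij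
    have hd2 := hdisj hij
    simp only [Function.onFun, Set.disjoint_left] at hd2 ⊢
    rintro σ ⟨x, hx, rfl⟩ ⟨y, hy, hxy⟩
    exact hd2 hx (by rwa [injOn_psi hu (hSsub j hy) (hSsub i hx) hxy] at hy)
  have h1 : μH[d] (psi u '' T) = ∑' k, μH[d] (psi u '' S k) := by
    rw [hcover, Set.image_iUnion, measure_iUnion hIdisj hIm]
  have h2 : (∫⁻ w in T, ENNReal.ofReal (lam u w) ^ d ∂μH[d]) =
      ∑' k, ∫⁻ w in S k, ENNReal.ofReal (lam u w) ^ d ∂μH[d] := by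
    rw [hcover]
    exact lintegral_iUnion hSm hdisj _
  -- per-piece bounds
  have hcpos : (0:ℝ) < c := lt_trans one_pos hc
  set a : ℕ → ℝ := fun k => 2 / ‖u‖ / c ^ (k + 1) with ha_def
  have hapos : ∀ k, 0 < a k := fun k => by
    rw [ha_def]
    positivity
  have hb : ∀ k, 2 / ‖u‖ / c ^ k = c * a k := fun k => by
    rw [ha_def]
    field_simp
    ring
  have hbdd : ∀ k, ∀ w ∈ S k, a k ≤ lam u w ∧ lam u w ≤ c * a k := by
    intro k w hw
    obtain ⟨-, -, hlt, hle⟩ := hw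
    exact ⟨hlt.le, (hb k) ▸ hle⟩
  have hstep1 := fun k => step1 hu (hSsub k) (hapos k) (hbdd k) hd
  -- pointwise integrand bounds
  have hint_lb : ∀ k, ENNReal.ofReal (a k) ^ d * μH[d] (S k) ≤
      ∫⁻ w in S k, ENNReal.ofReal (lam u w) ^ d ∂μH[d] := by
    intro k
    rw [← setLIntegral_const (S k) (ENNReal.ofReal (a k) ^ d)]
    refine setLIntegral_mono' (hSm k) fun w hw => ?_
    exact ENNReal.rpow_le_rpow (ENNReal.ofReal_le_ofReal (hbdd k w hw).1) hd
  have hint_ub : ∀ k, (∫⁻ w in S k, ENNReal.ofReal (lam u w) ^ d ∂μH[d]) ≤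
      ENNReal.ofReal (c * a k) ^ d * μH[d] (S k) := by
    intro k
    rw [← setLIntegral_const (S k) (ENNReal.ofReal (c * a k) ^ d)]
    refine setLIntegral_mono' (hSm k) fun w hw => ?_
    exact ENNReal.rpow_le_rpow (ENNReal.ofReal_le_ofReal (hbdd k w hw).2) hd
  have hsplit : ∀ k, ENNReal.ofReal (c * a k) ^ d =
      ENNReal.ofReal c ^ d * ENNReal.ofReal (a k) ^ d := by
    intro k
    rw [ENNReal.ofReal_mul hcpos.le, ENNReal.mul_rpow_of_nonneg _ _ hd]
  constructor
  · rw [h1, h2, ← ENNReal.tsum_mul_left]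
    refine ENNReal.tsum_le_tsum fun k => ?_
    calc μH[d] (psi u '' S k) ≤ ENNReal.ofReal (c * a k) ^ d * μH[d] (S k) := (hstep1 k).2
      _ = ENNReal.ofReal c ^ d * (ENNReal.ofReal (a k) ^ d * μH[d] (S k)) := by
          rw [hsplit k, mul_assoc]
      _ ≤ ENNReal.ofReal c ^ d * ∫⁻ w in S k, ENNReal.ofReal (lam u w) ^ d ∂μH[d] := by
          gcongr
          exact hint_lb k
  · rw [h1, h2, ← ENNReal.tsum_mul_left]
    refine ENNReal.tsum_le_tsum fun k => ?_
    calc (∫⁻ w in S k, ENNReal.ofReal (lam u w) ^ d ∂μH[d])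
        ≤ ENNReal.ofReal (c * a k) ^ d * μH[d] (S k) := hint_ub k
      _ = ENNReal.ofReal c ^ d * (ENNReal.ofReal (a k) ^ d * μH[d] (S k)) := by
          rw [hsplit k, mul_assoc]
      _ ≤ ENNReal.ofReal c ^ d * μH[d] (psi u '' S k) := by
          gcongr
          exact (hstep1 k).1

lemma step3 {d : ℝ} (hd : 0 ≤ d) {T : Set (E N)} (hT : T ⊆ Hyp u) (hTm : MeasurableSet T) :
    μH[d] (psi u '' T) = ∫⁻ w in T, ENNReal.ofReal (lam u w) ^ d ∂μH[d] := by
  have hc : ∀ n : ℕ, 1 < 1 + (1 : ℝ) / (n + 1) := by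
    intro n
    have : (0:ℝ) < 1 / (n + 1) := by positivity
    linarith
  have key := fun n : ℕ => step2 hu hd hT hTm (hc n)
  -- limit of the constants
  have htend : ∀ Y : ℝ≥0∞, Filter.Tendsto
      (fun n : ℕ => ENNReal.ofReal (1 + (1:ℝ) / (n + 1)) ^ d * Y) Filter.atTop (𝓝 Y) := by
    intro Y
    have h0 : Filter.Tendsto (fun n : ℕ => 1 + (1:ℝ) / (n + 1)) Filter.atTop (𝓝 1) := by
      have : Filter.Tendsto (fun n : ℕ => 1 / ((n : ℝ) + 1)) Filter.atTop (𝓝 0) :=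
        tendsto_one_div_add_atTop_nhds_zero_nat
      have h1 := Filter.Tendsto.const_add (1:ℝ) this
      simpa using h1
    have h2 : Filter.Tendsto (fun n : ℕ => ENNReal.ofReal (1 + (1:ℝ) / (n + 1)) ^ d)
        Filter.atTop (𝓝 1) := by
      have h3 := (ENNReal.continuous_ofReal.tendsto 1).comp h0
      have h4 := ((ENNReal.continuous_rpow_const (y := d)).tendsto (ENNReal.ofReal 1)).comp h3
      simpa [Function.comp_def, ENNReal.ofReal_one, ENNReal.one_rpow] using h4
    have h5 := ENNReal.Tendsto.mul_const (b := Y) h2 (Or.inl one_ne_zero)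
    simpa using h5
  refine le_antisymm ?_ ?_
  · exact ge_of_tendsto' (htend _) fun n => (key n).1
  · exact ge_of_tendsto' (htend _) fun n => (key n).2

lemma bijOn_psi : Set.BijOn (psi u) (Hyp u)
    (sphere (0 : E N) 1 \ {-(‖u‖⁻¹ • u)}) := by
  refine ⟨fun w hw => ?_, injOn_psi hu, fun σ hσ => ?_⟩
  · exact ⟨mem_sphere_zero_iff_norm.2 (norm_psi hu hw), psi_ne hu hw⟩
  · obtain ⟨h1, h2⟩ := surj_psi hu (mem_sphere_zero_iff_norm.1 hσ.1) hσ.2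
    exact ⟨chi u σ, h1, h2⟩

lemma measure_restrict_eq {d : ℝ} (hd : 0 ≤ d) :
    μH[d].restrict (psi u '' Hyp u) =
      Measure.map (psi u) ((μH[d].restrict (Hyp u)).withDensity
        fun w => ENNReal.ofReal (lam u w) ^ d) := by
  have hmeasψ : Measurable (psi u) := (continuous_psi hu).measurable
  have hLmeas : Measurable fun w : E N => ENNReal.ofReal (lam u w) ^ d := by
    have : Measurable fun x : ℝ≥0∞ => x ^ d := ENNReal.continuous_rpow_const.measurable
    exact this.comp ((continuous_lam hu).measurable.ennreal_ofReal)
  ext S hS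
  rw [Measure.restrict_apply hS, Measure.map_apply hmeasψ hS,
    withDensity_apply _ (hmeasψ hS), Measure.restrict_restrict (hmeasψ hS)]
  have hTm : MeasurableSet (psi u ⁻¹' S ∩ Hyp u) := (hmeasψ hS).inter measurableSet_hyp
  have := step3 hu hd (Set.inter_subset_right : psi u ⁻¹' S ∩ Hyp u ⊆ Hyp u) hTm
  rw [Set.image_preimage_inter] at this
  exact this

lemma main_integral {d : ℝ} (hd : 0 < d) (h : E N → ℝ≥0∞) (hh : Measurable h) :
    (∫⁻ σ in sphere (0 : E N) 1, h σ ∂μH[d]) =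
      ∫⁻ w in Hyp u, h (psi u w) * ENNReal.ofReal (lam u w) ^ d ∂μH[d] := by
  haveI : NullSingletonClass (μH[d] : Measure (E N)) := Measure.noAtoms_hausdorff (E N) hd
  have hmeasψ : Measurable (psi u) := (continuous_psi hu).measurable
  have hLmeas : Measurable fun w : E N => ENNReal.ofReal (lam u w) ^ d := by
    have : Measurable fun x : ℝ≥0∞ => x ^ d := ENNReal.continuous_rpow_const.measurable
    exact this.comp ((continuous_lam hu).measurable.ennreal_ofReal)
  have hae : (sphere (0 : E N) 1 \ {-(‖u‖⁻¹ • u)} : Set (E N)) =ᵐ[μH[d]]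
      sphere (0 : E N) 1 := by
    rw [diff_ae_eq_self]
    exact measure_mono_null Set.inter_subset_right (measure_singleton _)
  have himg : psi u '' Hyp u = sphere (0 : E N) 1 \ {-(‖u‖⁻¹ • u)} :=
    (bijOn_psi hu).image_eq
  rw [← Measure.restrict_congr_set hae, ← himg, measure_restrict_eq hu hd.le,
    lintegral_map hh hmeasψ,
    lintegral_withDensity_eq_lintegral_mul _ hLmeas (g := fun a => h (psi u a)) (hh.comp hmeasψ)]
  refine lintegral_congr fun w => ?_
  simp only [Pi.mul_apply, Function.comp_apply]
  ring

end algebra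

end StereoAux

/-- **The stereographic change of variables on the sphere** (the conformal change of
variables used in the cancellation lemma, Lemma 5.1 of the paper). For `u ≠ 0`, the map
`ψ(w) = 2|u|(u+w)/(|u|²+|w|²) − u/|u|` is a bijection from the hyperplane `{w : w·u = 0}`
onto `S^{N-1} ∖ {−u/|u|}`, and for every measurable `h : S^{N-1} → [0,∞]`,
`∫_{S^{N-1}} h dσ = 2^{N-1}|u|^{N-1} ∫_H h(ψ(w)) (|u|²+|w|²)^{-(N-1)} dS(w)`. -/
theorem stereographic_change_of_variables
    (N : ℕ) (hN : 2 ≤ N) (u : EuclideanSpace ℝ (Fin N)) (hu : u ≠ 0) :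
    Set.BijOn
      (fun w : EuclideanSpace ℝ (Fin N) =>
        ((2 * ‖u‖) / (‖u‖ ^ 2 + ‖w‖ ^ 2)) • (u + w) - ‖u‖⁻¹ • u)
      {w : EuclideanSpace ℝ (Fin N) | ⟪w, u⟫ = 0}
      (sphere (0 : EuclideanSpace ℝ (Fin N)) 1 \ {-(‖u‖⁻¹ • u)}) ∧
    ∀ h : EuclideanSpace ℝ (Fin N) → ℝ≥0∞, Measurable h →
      (∫⁻ σ in sphere (0 : EuclideanSpace ℝ (Fin N)) 1, h σ ∂(μH[(N : ℝ) - 1])) =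
        (2 : ℝ≥0∞) ^ (N - 1) * ENNReal.ofReal (‖u‖ ^ (N - 1)) *
          ∫⁻ w in {w : EuclideanSpace ℝ (Fin N) | ⟪w, u⟫ = 0},
            h (((2 * ‖u‖) / (‖u‖ ^ 2 + ‖w‖ ^ 2)) • (u + w) - ‖u‖⁻¹ • u) *
              ENNReal.ofReal ((‖u‖ ^ 2 + ‖w‖ ^ 2) ^ (-((N : ℝ) - 1)))
            ∂(μH[(N : ℝ) - 1]) := by
  have hR := StereoAux.normu_pos hu
  set d : ℝ := (N : ℝ) - 1 with hd_def
  have hdc : ((N - 1 : ℕ) : ℝ) = d := by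
    rw [hd_def, Nat.cast_sub (by omega)]
    norm_num
  have hd : (0 : ℝ) < d := by
    rw [hd_def]
    have : (2 : ℝ) ≤ (N : ℝ) := by exact_mod_cast hN
    linarith
  constructor
  · exact StereoAux.bijOn_psi hu
  · intro h hh
    rw [StereoAux.main_integral hu hd h hh]
    -- pointwise identity for the density
    set C : ℝ≥0∞ := (2 : ℝ≥0∞) ^ (N - 1) * ENNReal.ofReal (‖u‖ ^ (N - 1)) with hC
    have hpt : ∀ w : EuclideanSpace ℝ (Fin N),
        ENNReal.ofReal (StereoAux.lam u w) ^ d =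
          C * ENNReal.ofReal ((‖u‖ ^ 2 + ‖w‖ ^ 2) ^ (-d)) := by
      intro w
      have hP := StereoAux.denom_pos hu w
      have h1 : ENNReal.ofReal (StereoAux.lam u w) ^ d =
          ENNReal.ofReal (StereoAux.lam u w ^ d) :=
        ENNReal.ofReal_rpow_of_pos (StereoAux.lam_pos hu w)
      have h2 : StereoAux.lam u w ^ d =
          ((2 : ℝ) ^ (N - 1) * ‖u‖ ^ (N - 1)) * (‖u‖ ^ 2 + ‖w‖ ^ 2) ^ (-d) := by
        rw [StereoAux.lam, Real.div_rpow (by positivity) hP.le, Real.rpow_neg hP.le,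
          div_eq_mul_inv, Real.mul_rpow (by norm_num) (norm_nonneg u), ← hdc,
          Real.rpow_natCast, Real.rpow_natCast]
      rw [h1, h2, ENNReal.ofReal_mul (by positivity), ENNReal.ofReal_mul (by positivity), hC]
      congr 1
      rw [ENNReal.ofReal_pow (by norm_num : (0:ℝ) ≤ 2)]
      norm_num
    have hmeasg : Measurable fun w : EuclideanSpace ℝ (Fin N) =>
        ENNReal.ofReal ((‖u‖ ^ 2 + ‖w‖ ^ 2) ^ (-d)) := by
      apply Measurable.ennreal_ofReal
      apply Continuous.measurable
      apply Continuous.rpow_const (continuous_const.add (continuous_norm.pow 2))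
      intro w
      exact Or.inl (ne_of_gt (StereoAux.denom_pos hu w))
    have hmeasψ : Measurable (StereoAux.psi u) := (StereoAux.continuous_psi hu).measurable
    calc (∫⁻ w in StereoAux.Hyp u,
          h (StereoAux.psi u w) * ENNReal.ofReal (StereoAux.lam u w) ^ d ∂μH[d])
        = ∫⁻ w in StereoAux.Hyp u,
            C * (h (StereoAux.psi u w) *
              ENNReal.ofReal ((‖u‖ ^ 2 + ‖w‖ ^ 2) ^ (-d))) ∂μH[d] := by
          refine lintegral_congr fun w => ?_
          rw [hpt w]
          ring
      _ = C * ∫⁻ w in StereoAux.Hyp u,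
            h (StereoAux.psi u w) *
              ENNReal.ofReal ((‖u‖ ^ 2 + ‖w‖ ^ 2) ^ (-d)) ∂μH[d] := by
          exact lintegral_const_mul C ((hh.comp hmeasψ).mul hmeasg)
      _ = _ := rfl
end
end
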